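/- arXiv:2106.02865 — 7 statements merged into one kernel-verified Lean document; each statement's English description precedes it below -/
import Mathlib

section
/- Let m ≥ 2 be a positive integer and let D_1, …, D_m be n×n real matrices with nonnegative entries and strictly positive diagonal entries. Then there exists a constant γ > 0 (depending on D_1, …, D_m) such that the entrywise inequality (D_1 D_2 ⋯ D_m)_{ij} ≥ γ (D_1 + D_2 + ⋯ + D_m)_{ij} holds for all i, j. -/
open Matrix

private lemma entry_le_mul_left {n : ℕ} (A B : Matrix (Fin n) (Fin n) ℝ)
    (hA : ∀ i j, 0 ≤ A i j) (hB : ∀ i j, 0 ≤ B i j) (i j : Fin n) :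
    A i i * B i j ≤ (A * B) i j := by
  rw [Matrix.mul_apply]
  exact Finset.single_le_sum (f := fun x => A i x * B x j)
    (fun x _ => mul_nonneg (hA i x) (hB x j)) (Finset.mem_univ i)

private lemma entry_le_mul_right {n : ℕ} (A B : Matrix (Fin n) (Fin n) ℝ)
    (hA : ∀ i j, 0 ≤ A i j) (hB : ∀ i j, 0 ≤ B i j) (i j : Fin n) :
    A i j * B j j ≤ (A * B) i j := by
  rw [Matrix.mul_apply]
  exact Finset.single_le_sum (f := fun x => A i x * B x j)
    (fun x _ => mul_nonneg (hA i x) (hB x j)) (Finset.mem_univ j)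

private lemma key {n : ℕ} (d : ℝ) (hd0 : 0 < d) :
    ∀ (L : List (Matrix (Fin n) (Fin n) ℝ)),
      (∀ A ∈ L, (∀ i j, 0 ≤ A i j) ∧ ∀ i, d ≤ A i i) →
      (∀ i j, 0 ≤ L.prod i j) ∧ (∀ i, d ^ L.length ≤ L.prod i i) ∧
      (∀ (k : ℕ) (hk : k < L.length), ∀ i j, d ^ (L.length - 1) * (L[k]'hk) i j ≤ L.prod i j)
  | [] => by
    intro _
    refine ⟨?_, ?_, ?_⟩
    · intro i j
      simp [Matrix.one_apply]
      split <;> norm_num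
    · intro i; simp [Matrix.one_apply]
    · intro k hk; simp at hk
  | (A :: T) => by
    intro h
    have hA := h A List.mem_cons_self
    have hT : ∀ B ∈ T, (∀ i j, 0 ≤ B i j) ∧ ∀ i, d ≤ B i i :=
      fun B hB => h B (List.mem_cons_of_mem A hB)
    obtain ⟨ih1, ih2, ih3⟩ := key d hd0 T hT
    have hAnn := hA.1
    have hprodnn : ∀ i j, 0 ≤ (A :: T).prod i j := by
      intro i j
      rw [List.prod_cons, Matrix.mul_apply]
      exact Finset.sum_nonneg fun x _ => mul_nonneg (hAnn i x) (ih1 x j)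
    refine ⟨hprodnn, ?_, ?_⟩
    · intro i
      rw [List.prod_cons, List.length_cons, pow_succ']
      calc d * d ^ T.length ≤ A i i * T.prod i i := by
            exact mul_le_mul (hA.2 i) (ih2 i) (pow_nonneg hd0.le _) ((hd0.trans_le (hA.2 i)).le)
        _ ≤ (A * T.prod) i i := entry_le_mul_left A T.prod hAnn ih1 i i
    · intro k hk i j
      rw [List.prod_cons]
      have hlen : (A :: T).length - 1 = T.length := by simp
      rw [hlen]
      match k with
      | 0 =>
        simp only [List.getElem_cons_zero]
        calc d ^ T.length * A i j ≤ A i j * T.prod j j := by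
              rw [mul_comm]
              exact mul_le_mul_of_nonneg_left (ih2 j) (hAnn i j)
          _ ≤ (A * T.prod) i j := entry_le_mul_right A T.prod hAnn ih1 i j
      | (k + 1) =>
        have hk' : k < T.length := by simpa using hk
        have hT1 : 1 ≤ T.length := Nat.one_le_of_lt (Nat.lt_of_le_of_lt (Nat.zero_le k) hk')
        simp only [List.getElem_cons_succ]
        have hnnTk : 0 ≤ (T[k]'hk') i j := (hT _ (List.getElem_mem hk')).1 i j
        calc d ^ T.length * (T[k]'hk') i j
            = d * (d ^ (T.length - 1) * (T[k]'hk') i j) := by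
              rw [← mul_assoc, ← pow_succ']
              congr 2
              omega
          _ ≤ A i i * T.prod i j := by
              refine mul_le_mul (hA.2 i) (ih3 k hk' i j) ?_ ((hd0.trans_le (hA.2 i)).le)
              exact mul_nonneg (pow_nonneg hd0.le _) hnnTk
          _ ≤ (A * T.prod) i j := entry_le_mul_left A T.prod hAnn ih1 i j

/-- For `m ≥ 2` nonnegative `n × n` matrices `D 0, …, D (m-1)` with strictly
positive diagonal entries, there exists `γ > 0` such that, entrywise,
`D 0 * D 1 * ⋯ * D (m-1) ≥ γ • (D 0 + D 1 + ⋯ + D (m-1))`. -/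
theorem prod_ge_smul_sum_of_nonneg_posDiag (n m : ℕ) (hm : 2 ≤ m)
    (D : Fin m → Matrix (Fin n) (Fin n) ℝ)
    (hnn : ∀ k : Fin m, ∀ i j : Fin n, 0 ≤ D k i j)
    (hdiag : ∀ k : Fin m, ∀ i : Fin n, 0 < D k i i) :
    ∃ γ : ℝ, 0 < γ ∧
      ∀ i j : Fin n, γ * (∑ k, D k i j) ≤ (List.ofFn D).prod i j := by
  rcases Nat.eq_zero_or_pos n with hn | hn
  · exact ⟨1, one_pos, fun i => absurd i.isLt (by omega)⟩
  · have hne : (Finset.univ : Finset (Fin m × Fin n)).Nonempty := by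
      refine ⟨⟨⟨0, by omega⟩, ⟨0, hn⟩⟩, Finset.mem_univ _⟩
    set d : ℝ := Finset.univ.inf' hne (fun p : Fin m × Fin n => D p.1 p.2 p.2) with hd
    have hd0 : 0 < d := by
      rw [hd, Finset.lt_inf'_iff]
      exact fun p _ => hdiag p.1 p.2
    have hdle : ∀ k i, d ≤ D k i i := fun k i =>
      Finset.inf'_le _ (Finset.mem_univ (k, i))
    have hL : ∀ A ∈ List.ofFn D, (∀ i j, 0 ≤ A i j) ∧ ∀ i, d ≤ A i i := by
      intro A hA
      rw [List.mem_ofFn] at hA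
      obtain ⟨k, rfl⟩ := hA
      exact ⟨hnn k, fun i => hdle k i⟩
    obtain ⟨h1, h2, h3⟩ := key d hd0 (List.ofFn D) hL
    refine ⟨d ^ (m - 1) / m, by positivity, fun i j => ?_⟩
    have hsum : ∑ k : Fin m, d ^ (m - 1) * D k i j ≤ ∑ _k : Fin m, (List.ofFn D).prod i j := by
      refine Finset.sum_le_sum fun k _ => ?_
      have hk : (k : ℕ) < (List.ofFn D).length := by simp [k.2]
      have := h3 k hk i j
      simpa [List.getElem_ofFn, List.length_ofFn] using this
    simp only [Finset.sum_const, Finset.card_univ, Fintype.card_fin, nsmul_eq_mul] at hsum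
    rw [← Finset.mul_sum] at hsum
    have hm0 : (0:ℝ) < m := by positivity
    rw [div_mul_eq_mul_div, div_le_iff₀ hm0]
    calc d ^ (m-1) * ∑ k, D k i j ≤ m * (List.ofFn D).prod i j := hsum
      _ = (List.ofFn D).prod i j * m := mul_comm _ _
end

section
/- Let B be an N×N row stochastic matrix with strictly positive diagonal entries, and suppose the directed graph associated with B contains a directed spanning tree. Then B is SIA; that is, there exists a vector c ∈ ℝ^N such that B^k converges to 1_N cᵀ as k → ∞. -/
open Matrix Filter Topology

section aux
variable {N : ℕ} (B : Matrix (Fin N) (Fin N) ℝ)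

lemma myPowNonneg (hnn : ∀ i j, 0 ≤ B i j) : ∀ (k : ℕ) (i j : Fin N), 0 ≤ (B ^ k) i j := by
  intro k
  induction k with
  | zero => intro i j; rw [pow_zero]; by_cases h : i = j <;> simp [Matrix.one_apply, h]
  | succ k ih =>
    intro i j
    rw [pow_succ', Matrix.mul_apply]
    exact Finset.sum_nonneg fun l _ => mul_nonneg (hnn i l) (ih l j)

lemma myPowRow (hrow : ∀ i, ∑ j, B i j = 1) : ∀ (k : ℕ) (i : Fin N), ∑ j, (B ^ k) i j = 1 := by
  intro k
  induction k with
  | zero => intro i; simp [pow_zero, Matrix.one_apply]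
  | succ k ih =>
    intro i
    rw [pow_succ']
    simp only [Matrix.mul_apply]
    rw [Finset.sum_comm]
    calc ∑ l, ∑ j, B i l * (B ^ k) l j = ∑ l, B i l * ∑ j, (B ^ k) l j := by
          simp [Finset.mul_sum]
      _ = ∑ l, B i l := by simp [ih]
      _ = 1 := hrow i

lemma myConvLeSup [Nonempty (Fin N)] (hnn : ∀ i j, 0 ≤ B i j)
    (hrow : ∀ i, ∑ j, B i j = 1) (x : Fin N → ℝ) (i : Fin N) :
    ∑ l, B i l * x l ≤ Finset.univ.sup' Finset.univ_nonempty x := by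
  calc ∑ l, B i l * x l ≤ ∑ l, B i l * Finset.univ.sup' Finset.univ_nonempty x :=
        Finset.sum_le_sum fun l _ =>
          mul_le_mul_of_nonneg_left (Finset.le_sup' x (Finset.mem_univ l)) (hnn i l)
    _ = Finset.univ.sup' Finset.univ_nonempty x := by rw [← Finset.sum_mul, hrow, one_mul]

lemma myInfLeConv [Nonempty (Fin N)] (hnn : ∀ i j, 0 ≤ B i j)
    (hrow : ∀ i, ∑ j, B i j = 1) (x : Fin N → ℝ) (i : Fin N) :
    Finset.univ.inf' Finset.univ_nonempty x ≤ ∑ l, B i l * x l := by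
  calc Finset.univ.inf' Finset.univ_nonempty x
      = ∑ l, B i l * Finset.univ.inf' Finset.univ_nonempty x := by
        rw [← Finset.sum_mul, hrow, one_mul]
    _ ≤ ∑ l, B i l * x l :=
        Finset.sum_le_sum fun l _ =>
          mul_le_mul_of_nonneg_left (Finset.inf'_le x (Finset.mem_univ l)) (hnn i l)

lemma myContraction [Nonempty (Fin N)]
    (hnn : ∀ i j, 0 ≤ B i j) (hrow : ∀ i, ∑ j, B i j = 1)
    (r : Fin N) (δ : ℝ) (hδ : ∀ i, δ ≤ B i r) (x : Fin N → ℝ) :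
    Finset.univ.sup' Finset.univ_nonempty (fun i => ∑ l, B i l * x l)
      - Finset.univ.inf' Finset.univ_nonempty (fun i => ∑ l, B i l * x l)
      ≤ (1 - δ) * (Finset.univ.sup' Finset.univ_nonempty x
          - Finset.univ.inf' Finset.univ_nonempty x) := by
  set S := Finset.univ.sup' Finset.univ_nonempty x with hS
  set I := Finset.univ.inf' Finset.univ_nonempty x with hI
  have hxS : ∀ l, x l ≤ S := fun l => Finset.le_sup' x (Finset.mem_univ l)
  have hxI : ∀ l, I ≤ x l := fun l => Finset.inf'_le x (Finset.mem_univ l)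
  have hupper : ∀ i, ∑ l, B i l * x l ≤ B i r * x r + (1 - B i r) * S := by
    intro i
    have hsum : ∑ l ∈ Finset.univ.erase r, B i l = 1 - B i r := by
      have h := Finset.sum_erase_add Finset.univ (fun l => B i l) (Finset.mem_univ r)
      have := hrow i
      linarith
    have h2 : ∑ l ∈ Finset.univ.erase r, B i l * x l + B i r * x r = ∑ l, B i l * x l :=
      Finset.sum_erase_add Finset.univ (fun l => B i l * x l) (Finset.mem_univ r)
    have h3 : ∑ l ∈ Finset.univ.erase r, B i l * x l ≤ (1 - B i r) * S := by
      calc ∑ l ∈ Finset.univ.erase r, B i l * x l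
          ≤ ∑ l ∈ Finset.univ.erase r, B i l * S :=
            Finset.sum_le_sum fun l _ => mul_le_mul_of_nonneg_left (hxS l) (hnn i l)
        _ = (1 - B i r) * S := by rw [← Finset.sum_mul, hsum]
    linarith
  have hlower : ∀ i, B i r * x r + (1 - B i r) * I ≤ ∑ l, B i l * x l := by
    intro i
    have hsum : ∑ l ∈ Finset.univ.erase r, B i l = 1 - B i r := by
      have h := Finset.sum_erase_add Finset.univ (fun l => B i l) (Finset.mem_univ r)
      have := hrow i
      linarith
    have h2 : ∑ l ∈ Finset.univ.erase r, B i l * x l + B i r * x r = ∑ l, B i l * x l :=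
      Finset.sum_erase_add Finset.univ (fun l => B i l * x l) (Finset.mem_univ r)
    have h3 : (1 - B i r) * I ≤ ∑ l ∈ Finset.univ.erase r, B i l * x l := by
      calc (1 - B i r) * I = ∑ l ∈ Finset.univ.erase r, B i l * I := by
            rw [← Finset.sum_mul, hsum]
        _ ≤ ∑ l ∈ Finset.univ.erase r, B i l * x l :=
            Finset.sum_le_sum fun l _ => mul_le_mul_of_nonneg_left (hxI l) (hnn i l)
    linarith
  have key : ∀ i i', (∑ l, B i l * x l) - (∑ l, B i' l * x l) ≤ (1 - δ) * (S - I) := by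
    intro i i'
    have h1 := hupper i
    have h2 := hlower i'
    nlinarith [mul_nonneg (sub_nonneg.2 (hδ i)) (sub_nonneg.2 (hxS r)),
      mul_nonneg (sub_nonneg.2 (hδ i')) (sub_nonneg.2 (hxI r))]
  obtain ⟨i, -, hi⟩ := Finset.exists_mem_eq_sup' (Finset.univ_nonempty (α := Fin N))
    (fun i => ∑ l, B i l * x l)
  obtain ⟨i', -, hi'⟩ := Finset.exists_mem_eq_inf' (Finset.univ_nonempty (α := Fin N))
    (fun i => ∑ l, B i l * x l)
  rw [hi, hi']
  exact key i i'

end aux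

/-- A row stochastic matrix `B` with strictly positive diagonal entries whose
associated directed graph (an edge from `j` to `i` whenever `i ≠ j` and `B i j > 0`) contains a
directed spanning tree is SIA: its powers `B ^ k` converge to `1_N cᵀ` for some `c ∈ ℝᴺ`. -/
theorem rowStochastic_posDiag_spanningTree_isSIA (N : ℕ) (B : Matrix (Fin N) (Fin N) ℝ)
    (hnn : ∀ i j : Fin N, 0 ≤ B i j)
    (hrow : ∀ i : Fin N, ∑ j, B i j = 1)
    (hdiag : ∀ i : Fin N, 0 < B i i)
    (htree : ∃ r : Fin N, ∀ i : Fin N,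
      Relation.ReflTransGen (fun j i : Fin N => i ≠ j ∧ 0 < B i j) r i) :
    ∃ c : Fin N → ℝ,
      Tendsto (fun k : ℕ => B ^ k) atTop (𝓝 (Matrix.of fun _ j : Fin N => c j)) := by
  obtain ⟨r, hr⟩ := htree
  haveI : Nonempty (Fin N) := ⟨r⟩
  have hBpow_nn : ∀ (k : ℕ) (i j : Fin N), 0 ≤ (B ^ k) i j := myPowNonneg B hnn
  have hBpow_row : ∀ (k : ℕ) (i : Fin N), ∑ j, (B ^ k) i j = 1 := myPowRow B hrow
  -- positivity persists under one more step
  have persist : ∀ (i j : Fin N) (k : ℕ), 0 < (B ^ k) i j → 0 < (B ^ (k + 1)) i j := by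
    intro i j k h
    rw [pow_succ', Matrix.mul_apply]
    have hpos : 0 < B i i * (B ^ k) i j := mul_pos (hdiag i) h
    have hle : B i i * (B ^ k) i j ≤ ∑ l, B i l * (B ^ k) l j :=
      Finset.single_le_sum (f := fun l => B i l * (B ^ k) l j)
        (fun l _ => mul_nonneg (hnn i l) (hBpow_nn k l j)) (Finset.mem_univ i)
    linarith
  have persist' : ∀ (i j : Fin N) (k k' : ℕ), k ≤ k' → 0 < (B ^ k) i j → 0 < (B ^ k') i j := by
    intro i j k k' hkk' h
    induction k', hkk' using Nat.le_induction with
    | base => exact h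
    | succ n hn ih => exact persist i j n ih
  -- reachability gives positivity of some power at column r
  have reach : ∀ i : Fin N, ∃ k : ℕ, 0 < (B ^ k) i r := by
    intro i
    induction hr i with
    | refl => exact ⟨0, by simp [Matrix.one_apply]⟩
    | @tail b c hab h ih =>
      obtain ⟨k, hk⟩ := ih
      refine ⟨k + 1, ?_⟩
      rw [pow_succ', Matrix.mul_apply]
      have hpos : 0 < B c b * (B ^ k) b r := mul_pos h.2 hk
      have hle : B c b * (B ^ k) b r ≤ ∑ l, B c l * (B ^ k) l r :=
        Finset.single_le_sum (f := fun l => B c l * (B ^ k) l r)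
          (fun l _ => mul_nonneg (hnn c l) (hBpow_nn k l r)) (Finset.mem_univ b)
      linarith
  choose kk hkk using reach
  set K : ℕ := Finset.univ.sup kk + 1 with hKdef
  have hKpos : 0 < K := Nat.succ_pos _
  set M : Matrix (Fin N) (Fin N) ℝ := B ^ K with hMdef
  have hMcol : ∀ i : Fin N, 0 < M i r := fun i =>
    persist' i r (kk i) K
      (le_trans (Finset.le_sup (Finset.mem_univ i)) (Nat.le_succ _)) (hkk i)
  set δ : ℝ := Finset.univ.inf' Finset.univ_nonempty (fun i => M i r) with hδdef
  have hδpos : 0 < δ := (Finset.lt_inf'_iff Finset.univ_nonempty).2 fun i _ => hMcol i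
  have hδle : ∀ i, δ ≤ M i r := fun i => Finset.inf'_le _ (Finset.mem_univ i)
  have hM_nn : ∀ i j, 0 ≤ M i j := hBpow_nn K
  have hM_row : ∀ i, ∑ j, M i j = 1 := hBpow_row K
  have hδ1 : δ ≤ 1 := by
    have h1 : δ ≤ M r r := hδle r
    have h2 : M r r ≤ ∑ j, M r j :=
      Finset.single_le_sum (fun j _ => hM_nn r j) (Finset.mem_univ r)
    rw [hM_row r] at h2
    linarith
  -- per-column convergence
  have key : ∀ j : Fin N, ∃ cj : ℝ, ∀ i : Fin N,
      Tendsto (fun k : ℕ => (B ^ k) i j) atTop (𝓝 cj) := by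
    intro j
    set S : ℕ → ℝ := fun k =>
      Finset.univ.sup' Finset.univ_nonempty (fun i => (B ^ k) i j) with hSdef
    set I : ℕ → ℝ := fun k =>
      Finset.univ.inf' Finset.univ_nonempty (fun i => (B ^ k) i j) with hIdef
    have hentry : ∀ (k : ℕ) (i : Fin N), (B ^ (k + 1)) i j = ∑ l, B i l * (B ^ k) l j := by
      intro k i; rw [pow_succ', Matrix.mul_apply]
    have hstepS : ∀ k, S (k + 1) ≤ S k := by
      intro k
      apply Finset.sup'_le
      intro i _
      rw [hentry]
      exact myConvLeSup B hnn hrow (fun l => (B ^ k) l j) i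
    have hstepI : ∀ k, I k ≤ I (k + 1) := by
      intro k
      apply Finset.le_inf'
      intro i _
      rw [hentry]
      exact myInfLeConv B hnn hrow (fun l => (B ^ k) l j) i
    have hSanti : Antitone S := antitone_nat_of_succ_le hstepS
    have hImono : Monotone I := monotone_nat_of_le_succ hstepI
    have hIS : ∀ k, I k ≤ S k := fun k =>
      le_trans (Finset.inf'_le (fun i => (B ^ k) i j) (Finset.mem_univ r))
        (Finset.le_sup' (fun i => (B ^ k) i j) (Finset.mem_univ r))
    have hcontr : ∀ k, S (K + k) - I (K + k) ≤ (1 - δ) * (S k - I k) := by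
      intro k
      have heq : (fun i => (B ^ (K + k)) i j) = fun i => ∑ l, M i l * (B ^ k) l j := by
        funext i
        rw [pow_add, Matrix.mul_apply]
      have hc := myContraction M hM_nn hM_row r δ hδle (fun l => (B ^ k) l j)
      simp only [hSdef, hIdef, heq]
      exact hc
    have hgeo : ∀ m : ℕ, S (m * K) - I (m * K) ≤ (1 - δ) ^ m * (S 0 - I 0) := by
      intro m
      induction m with
      | zero => simp
      | succ m ih =>
        have h1 : (m + 1) * K = K + m * K := by ring
        rw [h1]
        calc S (K + m * K) - I (K + m * K) ≤ (1 - δ) * (S (m * K) - I (m * K)) := hcontr _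
          _ ≤ (1 - δ) * ((1 - δ) ^ m * (S 0 - I 0)) :=
              mul_le_mul_of_nonneg_left ih (by linarith)
          _ = (1 - δ) ^ (m + 1) * (S 0 - I 0) := by ring
    have hSbdd : BddBelow (Set.range S) :=
      ⟨I 0, by rintro _ ⟨k, rfl⟩; exact le_trans (hImono (Nat.zero_le k)) (hIS k)⟩
    have hIbdd : BddAbove (Set.range I) :=
      ⟨S 0, by rintro _ ⟨k, rfl⟩; exact le_trans (hIS k) (hSanti (Nat.zero_le k))⟩
    have hStend : Tendsto S atTop (𝓝 (⨅ k, S k)) := tendsto_atTop_ciInf hSanti hSbdd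
    have hItend : Tendsto I atTop (𝓝 (⨆ k, I k)) := tendsto_atTop_ciSup hImono hIbdd
    have hsub : Tendsto (fun m : ℕ => m * K) atTop atTop :=
      tendsto_atTop_mono (fun m => Nat.le_mul_of_pos_right m hKpos) tendsto_id
    have hdiff0 : Tendsto (fun m : ℕ => S (m * K) - I (m * K)) atTop (𝓝 0) := by
      apply tendsto_of_tendsto_of_tendsto_of_le_of_le (g := fun _ : ℕ => (0 : ℝ))
        (h := fun m : ℕ => (1 - δ) ^ m * (S 0 - I 0))
      · exact tendsto_const_nhds
      · have h0 : Tendsto (fun m : ℕ => (1 - δ) ^ m) atTop (𝓝 0) :=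
          tendsto_pow_atTop_nhds_zero_of_lt_one (by linarith) (by linarith)
        simpa using h0.mul_const (S 0 - I 0)
      · intro m
        show (0 : ℝ) ≤ S (m * K) - I (m * K)
        have := hIS (m * K); linarith
      · intro m
        show S (m * K) - I (m * K) ≤ (1 - δ) ^ m * (S 0 - I 0)
        exact hgeo m
    have hlim : Tendsto (fun m : ℕ => S (m * K) - I (m * K)) atTop
        (𝓝 ((⨅ k, S k) - ⨆ k, I k)) := (hStend.comp hsub).sub (hItend.comp hsub)
    have heqlim : (⨅ k, S k) = ⨆ k, I k := by
      have := tendsto_nhds_unique hlim hdiff0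
      linarith
    refine ⟨⨅ k, S k, fun i => ?_⟩
    apply tendsto_of_tendsto_of_tendsto_of_le_of_le (g := I) (h := S)
    · rw [heqlim]; exact hItend
    · exact hStend
    · intro k; exact Finset.inf'_le (fun i' => (B ^ k) i' j) (Finset.mem_univ i)
    · intro k; exact Finset.le_sup' (fun i' => (B ^ k) i' j) (Finset.mem_univ i)
  choose c hc using key
  refine ⟨c, ?_⟩
  apply tendsto_pi_nhds.2
  intro i
  apply tendsto_pi_nhds.2
  intro j
  simpa using hc j i
end

section
/- (Theorem 1) Let L be an N×N Laplacian matrix, let P_e be an N×N row stochastic matrix with strictly positive diagonal entries, and suppose that the directed graph on vertices {1, …, N} with an edge from j to i whenever i ≠ j and (P_e)_{ij} > 0 or L_{ij} < 0 contains a directed spanning tree. Let (Δ_k)_{k≥1} be a sequence of impulsive interval lengths satisfying 0 < δ_min ≤ Δ_k ≤ δ_max for all k. Then there exists a vector c ∈ ℝ^N such that the left products ∏_{i=1}^k (P_e · exp(-Δ_i L)) converge to 1_N cᵀ as k → ∞; consequently, for every initial state x_0 ∈ ℝ^N, the iterates x_k = (∏_{i=1}^k P_e exp(-Δ_i L)) x_0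 converge to (cᵀ x_0) 1_N, i.e., all components of the state reach a common consensus value cᵀ x_0. -/
open Matrix Filter Topology Nat

namespace CCAux

variable {N : ℕ}

abbrev Mat (N : ℕ) := Matrix (Fin N) (Fin N) ℝ

lemma expSummable (A : Mat N) : Summable (fun n : ℕ => (n !⁻¹ : ℝ) • A ^ n) := by
  letI : SeminormedRing (Mat N) := Matrix.linftyOpSemiNormedRing
  letI : NormedRing (Mat N) := Matrix.linftyOpNormedRing
  letI : NormedAlgebra ℝ (Mat N) := Matrix.linftyOpNormedAlgebra
  exact NormedSpace.expSeries_summable' A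

lemma rowSummable (A : Mat N) (i : Fin N) :
    Summable (fun n : ℕ => ((n !⁻¹ : ℝ) • A ^ n) i) :=
  (expSummable A).map (Pi.evalAddMonoidHom (fun _ : Fin N => Fin N → ℝ) i)
    (by exact continuous_apply i)

lemma entrySummable (A : Mat N) (i j : Fin N) :
    Summable (fun n : ℕ => (n !⁻¹ : ℝ) * (A ^ n) i j) := by
  have h2 := (rowSummable A i).map (Pi.evalAddMonoidHom (fun _ : Fin N => ℝ) j)
    (by exact continuous_apply j)
  have : (fun n : ℕ => (n !⁻¹ : ℝ) * (A ^ n) i j)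
      = (⇑(Pi.evalAddMonoidHom (fun _ : Fin N => ℝ) j) ∘ fun n : ℕ => ((n !⁻¹ : ℝ) • A ^ n) i) := by
    funext n; simp [Matrix.smul_apply, smul_eq_mul]
  rw [this]; exact h2

lemma exp_apply (A : Mat N) (i j : Fin N) :
    NormedSpace.exp A i j = ∑' n : ℕ, (n !⁻¹ : ℝ) * (A ^ n) i j := by
  have h := congrFun (NormedSpace.exp_eq_tsum (𝕂 := ℝ) (𝔸 := Mat N)) A
  rw [h]; erw [tsum_apply (expSummable A), tsum_apply (rowSummable A i)]
  exact tsum_congr fun n => by simp [Matrix.smul_apply, smul_eq_mul]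

lemma pow_nonneg_entries {A : Mat N} (hA : ∀ i j, 0 ≤ A i j) (n : ℕ) :
    ∀ i j, 0 ≤ (A ^ n) i j := by
  induction n with
  | zero => intro i j; by_cases h : i = j <;> simp [pow_zero, Matrix.one_apply, h]
  | succ n ih =>
    intro i j
    rw [pow_succ, Matrix.mul_apply]
    exact Finset.sum_nonneg fun l _ => mul_nonneg (ih i l) (hA l j)

lemma exp_entry_nonneg {A : Mat N} (hA : ∀ i j, 0 ≤ A i j) (i j : Fin N) :
    0 ≤ NormedSpace.exp A i j := by
  rw [exp_apply]
  exact tsum_nonneg fun n => mul_nonneg (by positivity) (pow_nonneg_entries hA n i j)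

lemma exp_entry_lb {A : Mat N} (hA : ∀ i j, 0 ≤ A i j) (i j : Fin N) :
    (1 : Mat N) i j + A i j ≤ NormedSpace.exp A i j := by
  rw [exp_apply]
  have h := (entrySummable A i j).sum_le_tsum (Finset.range 2)
    (fun n _ => mul_nonneg (by positivity : (0:ℝ) ≤ (n !⁻¹ : ℝ)) (pow_nonneg_entries hA n i j))
  refine le_trans (le_of_eq ?_) h
  rw [Finset.sum_range_succ, Finset.sum_range_one]
  simp [pow_zero, pow_one]

lemma row_sum_pow_zero {B : Mat N} (hB : ∀ i, ∑ j, B i j = 0) (n : ℕ) (hn : n ≠ 0) (i : Fin N) :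
    ∑ j, (B ^ n) i j = 0 := by
  obtain ⟨m, rfl⟩ := Nat.exists_eq_succ_of_ne_zero hn
  rw [pow_succ]
  simp_rw [Matrix.mul_apply]
  rw [Finset.sum_comm]
  simp_rw [← Finset.mul_sum]
  simp [hB]

lemma exp_row_sum {B : Mat N} (hB : ∀ i, ∑ j, B i j = 0) (i : Fin N) :
    ∑ j, NormedSpace.exp B i j = 1 := by
  simp_rw [exp_apply]
  rw [← Summable.tsum_finsetSum (fun j _ => entrySummable B i j)]
  have : ∀ n : ℕ, (∑ j, (n !⁻¹ : ℝ) * (B ^ n) i j) = if n = 0 then 1 else 0 := by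
    intro n
    by_cases hn : n = 0
    · subst hn; simp [Matrix.one_apply, Finset.sum_ite_eq']
    · simp [hn, ← Finset.mul_sum, row_sum_pow_zero hB n hn i]
  calc (∑' n : ℕ, ∑ j, (n !⁻¹ : ℝ) * (B ^ n) i j) = ∑' n : ℕ, if n = 0 then (1:ℝ) else 0 := by
        exact tsum_congr this
    _ = 1 := by rw [tsum_eq_single 0 (by intro n hn; simp [hn])]; simp

lemma exp_smul_one (c : ℝ) :
    NormedSpace.exp (c • (1 : Mat N)) = Real.exp c • 1 := by
  letI : SeminormedRing (Mat N) := Matrix.linftyOpSemiNormedRing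
  letI : NormedRing (Mat N) := Matrix.linftyOpNormedRing
  letI : NormedAlgebra ℝ (Mat N) := Matrix.linftyOpNormedAlgebra
  erw [← Algebra.algebraMap_eq_smul_one, ← NormedSpace.algebraMap_exp_comm,
    Algebra.algebraMap_eq_smul_one, Real.exp_eq_exp_ℝ]

lemma exp_decomp (L : Mat N) (t α : ℝ) :
    NormedSpace.exp (-(t • L))
      = Real.exp (-(t * α)) • NormedSpace.exp (t • (α • (1 : Mat N) - L)) := by
  letI : SeminormedRing (Mat N) := Matrix.linftyOpSemiNormedRing
  letI : NormedRing (Mat N) := Matrix.linftyOpNormedRing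
  letI : NormedAlgebra ℝ (Mat N) := Matrix.linftyOpNormedAlgebra
  have hdec : -(t • L) = (-(t * α)) • (1 : Mat N) + t • (α • (1 : Mat N) - L) := by
    rw [smul_sub, smul_smul]; module
  letI : NormedAlgebra ℚ (Mat N) := .restrictScalars ℚ ℝ (Mat N)
  erw [hdec, NormedSpace.exp_add_of_commute (((Commute.one_left _).smul_left _).smul_right _),
    exp_smul_one, smul_mul_assoc, one_mul]
  rfl


/-- Row-stochastic. -/
def RS (B : Mat N) : Prop := (∀ i j, 0 ≤ B i j) ∧ ∀ i, ∑ j, B i j = 1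

lemma RS.one : RS (1 : Mat N) := by
  constructor
  · intro i j; by_cases h : i = j <;> simp [Matrix.one_apply, h]
  · intro i; simp [Matrix.one_apply, Finset.sum_ite_eq']

lemma RS.mul {A B : Mat N} (hA : RS A) (hB : RS B) : RS (A * B) := by
  constructor
  · intro i j; rw [Matrix.mul_apply]
    exact Finset.sum_nonneg fun l _ => mul_nonneg (hA.1 i l) (hB.1 l j)
  · intro i
    simp_rw [Matrix.mul_apply]
    rw [Finset.sum_comm]
    simp_rw [← Finset.mul_sum, hB.2, mul_one]
    exact hA.2 i

lemma RS.entry_le_one {B : Mat N} (h : RS B) (i j : Fin N) : B i j ≤ 1 := by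
  calc B i j ≤ ∑ l, B i l :=
        Finset.single_le_sum (fun l _ => h.1 i l) (Finset.mem_univ j)
    _ = 1 := h.2 i

lemma RS.listProd {l : List (Mat N)} (h : ∀ B ∈ l, RS B) : RS l.prod := by
  induction l with
  | nil => simpa using RS.one
  | cons B t ih =>
    rw [List.prod_cons]
    exact (h B (List.mem_cons_self)).mul (ih fun C hC => h C (List.mem_cons_of_mem _ hC))

/-- walks of length exactly `t` from `r` along `st`. -/
def Reach (st : Fin N → Fin N → Prop) (r : Fin N) : ℕ → Fin N → Prop
  | 0 => fun i => i = r
  | (t+1) => fun i => ∃ j, Reach st r t j ∧ st j i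

lemma Reach.mono {st : Fin N → Fin N → Prop} (hrefl : ∀ i, st i i) {r i : Fin N} {d t : ℕ}
    (hd : d ≤ t) (h : Reach st r d i) : Reach st r t i := by
  induction hd with
  | refl => exact h
  | step _ ih => exact ⟨i, ih, hrefl i⟩

lemma reach_of_rtg {st e : Fin N → Fin N → Prop} (he : ∀ j i, e j i → st j i) {r i : Fin N}
    (h : Relation.ReflTransGen e r i) : ∃ d, Reach st r d i := by
  induction h with
  | refl => exact ⟨0, rfl⟩
  | tail _ hstep ih => obtain ⟨d, hd⟩ := ih; exact ⟨d + 1, _, hd, he _ _ hstep⟩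

lemma prod_entry_lb {ε : ℝ} (hε : 0 ≤ ε) (st : Fin N → Fin N → Prop) (r : Fin N) :
    ∀ l : List (Mat N), (∀ B ∈ l, RS B ∧ ∀ i j, st j i → ε ≤ B i j) →
      ∀ i, Reach st r l.length i → ε ^ l.length ≤ l.prod i r := by
  intro l
  induction l with
  | nil =>
    intro _ i hi
    have : i = r := hi
    subst this
    simp [Matrix.one_apply]
  | cons B t ih =>
    intro hl i hi
    obtain ⟨j, hj, hst⟩ := hi
    have hBP : RS t.prod := RS.listProd fun C hC => (hl C (List.mem_cons_of_mem _ hC)).1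
    have hB := hl B (List.mem_cons_self)
    have h1 : ε ^ t.length ≤ t.prod j r := ih (fun C hC => hl C (List.mem_cons_of_mem _ hC)) j hj
    rw [List.prod_cons, List.length_cons, Matrix.mul_apply]
    calc ε ^ (t.length + 1) = ε * ε ^ t.length := by ring
      _ ≤ B i j * t.prod j r :=
        mul_le_mul (hB.2 i j hst) h1 (pow_nonneg hε _) (le_trans hε (hB.2 i j hst))
      _ ≤ ∑ m, B i m * t.prod m r :=
        Finset.single_le_sum (fun m _ => mul_nonneg (hB.1.1 i m) (hBP.1 m r))
          (Finset.mem_univ j)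


variable (hne : (Finset.univ : Finset (Fin N)).Nonempty)

lemma row_upper {B : Mat N} (hB : RS B) (x : Fin N → ℝ) (i : Fin N) :
    ∑ j, B i j * x j ≤ Finset.univ.sup' hne x := by
  calc ∑ j, B i j * x j ≤ ∑ j, B i j * Finset.univ.sup' hne x :=
        Finset.sum_le_sum fun j _ =>
          mul_le_mul_of_nonneg_left (Finset.le_sup' x (Finset.mem_univ j)) (hB.1 i j)
    _ = Finset.univ.sup' hne x := by rw [← Finset.sum_mul, hB.2, one_mul]

lemma row_lower {B : Mat N} (hB : RS B) (x : Fin N → ℝ) (i : Fin N) :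
    Finset.univ.inf' hne x ≤ ∑ j, B i j * x j := by
  calc Finset.univ.inf' hne x = ∑ j, B i j * Finset.univ.inf' hne x := by
        rw [← Finset.sum_mul, hB.2, one_mul]
    _ ≤ ∑ j, B i j * x j :=
        Finset.sum_le_sum fun j _ =>
          mul_le_mul_of_nonneg_left (Finset.inf'_le x (Finset.mem_univ j)) (hB.1 i j)

lemma row_contract_upper {B : Mat N} (hB : RS B) {η : ℝ} {r : Fin N}
    (hr : ∀ i, η ≤ B i r) (x : Fin N → ℝ) (i : Fin N) :
    ∑ j, B i j * x j ≤ η * x r + (1 - η) * Finset.univ.sup' hne x := by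
  have hw : ∀ j, 0 ≤ B i j - if j = r then η else 0 := by
    intro j
    by_cases h : j = r
    · subst h; simpa using sub_nonneg.2 (hr i)
    · simpa [h] using hB.1 i j
  have hws : ∑ j, (B i j - if j = r then η else 0) = 1 - η := by
    rw [Finset.sum_sub_distrib, hB.2]
    simp [Finset.sum_ite_eq']
  have hsplit : ∑ j, B i j * x j = η * x r + ∑ j, (B i j - if j = r then η else 0) * x j := by
    simp_rw [sub_mul, Finset.sum_sub_distrib, ite_mul, zero_mul]
    rw [Finset.sum_ite_eq' Finset.univ r (fun j => η * x j)]
    simp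
  rw [hsplit]
  gcongr
  calc ∑ j, (B i j - if j = r then η else 0) * x j
      ≤ ∑ j, (B i j - if j = r then η else 0) * Finset.univ.sup' hne x :=
        Finset.sum_le_sum fun j _ =>
          mul_le_mul_of_nonneg_left (Finset.le_sup' x (Finset.mem_univ j)) (hw j)
    _ = (1 - η) * Finset.univ.sup' hne x := by rw [← Finset.sum_mul, hws]

lemma row_contract_lower {B : Mat N} (hB : RS B) {η : ℝ} {r : Fin N}
    (hr : ∀ i, η ≤ B i r) (x : Fin N → ℝ) (i : Fin N) :
    η * x r + (1 - η) * Finset.univ.inf' hne x ≤ ∑ j, B i j * x j := by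
  have hw : ∀ j, 0 ≤ B i j - if j = r then η else 0 := by
    intro j
    by_cases h : j = r
    · subst h; simpa using sub_nonneg.2 (hr i)
    · simpa [h] using hB.1 i j
  have hws : ∑ j, (B i j - if j = r then η else 0) = 1 - η := by
    rw [Finset.sum_sub_distrib, hB.2]
    simp [Finset.sum_ite_eq']
  have hsplit : ∑ j, B i j * x j = η * x r + ∑ j, (B i j - if j = r then η else 0) * x j := by
    simp_rw [sub_mul, Finset.sum_sub_distrib, ite_mul, zero_mul]
    rw [Finset.sum_ite_eq' Finset.univ r (fun j => η * x j)]
    simp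
  rw [hsplit]
  gcongr
  calc (1 - η) * Finset.univ.inf' hne x = ∑ j, (B i j - if j = r then η else 0) * Finset.univ.inf' hne x := by
        rw [← Finset.sum_mul, hws]
    _ ≤ ∑ j, (B i j - if j = r then η else 0) * x j :=
        Finset.sum_le_sum fun j _ =>
          mul_le_mul_of_nonneg_left (Finset.inf'_le x (Finset.mem_univ j)) (hw j)


theorem converge (hN : 0 < N) (M : ℕ → Mat N) {ε : ℝ} (hε : 0 < ε)
    (st : Fin N → Fin N → Prop)
    (hM : ∀ k, RS (M k) ∧ ∀ i j, st j i → ε ≤ M k i j)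
    (r : Fin N) (D : ℕ) (hreach : ∀ i, Reach st r D i) :
    ∃ c : Fin N → ℝ, ∀ i j : Fin N,
      Tendsto (fun k => ((List.range k).reverse.map M).prod i j) atTop (𝓝 (c j)) := by
  have hne : (Finset.univ : Finset (Fin N)).Nonempty := ⟨⟨0, hN⟩, Finset.mem_univ _⟩
  set P : ℕ → Mat N := fun k => ((List.range k).reverse.map M).prod with hPdef
  have hPRS : ∀ k, RS (P k) := by
    intro k
    apply RS.listProd
    intro B hB
    simp only [List.mem_map, List.mem_reverse, List.mem_range] at hB
    obtain ⟨a, _, rfl⟩ := hB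
    exact (hM a).1
  have hPsucc : ∀ k, P (k + 1) = M k * P k := by
    intro k
    show ((List.range (k+1)).reverse.map M).prod = _
    rw [List.range_succ, List.reverse_append, List.reverse_singleton, List.singleton_append,
      List.map_cons, List.prod_cons]
  have hshift : ∀ m k, ∃ l : List (Mat N), l.length = m ∧
      (∀ B ∈ l, RS B ∧ ∀ i j, st j i → ε ≤ B i j) ∧ P (k + m) = l.prod * P k := by
    intro m
    induction m with
    | zero => exact fun k => ⟨[], rfl, by simp, by simp⟩
    | succ m ih =>
      intro k
      obtain ⟨l, hlen, hl, hPe⟩ := ih k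
      refine ⟨M (k + m) :: l, by simp [hlen], ?_, ?_⟩
      · intro B hB
        rcases List.mem_cons.1 hB with h | h
        · subst h; exact hM (k + m)
        · exact hl B h
      · show P ((k + m) + 1) = _
        rw [hPsucc, hPe, List.prod_cons, mul_assoc]
  set mn : ℕ → Fin N → ℝ := fun k j => Finset.univ.inf' hne (fun i => P k i j) with hmn
  set Mx : ℕ → Fin N → ℝ := fun k j => Finset.univ.sup' hne (fun i => P k i j) with hMx
  have hmnP : ∀ k j i, mn k j ≤ P k i j := by
    intro k j i
    simp only [hmn]
    exact Finset.inf'_le (fun i => P k i j) (Finset.mem_univ i)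
  have hPMx : ∀ k j i, P k i j ≤ Mx k j := by
    intro k j i
    simp only [hMx]
    exact Finset.le_sup' (fun i => P k i j) (Finset.mem_univ i)
  have hmnMx : ∀ k j, mn k j ≤ Mx k j := fun k j => le_trans (hmnP k j r) (hPMx k j r)
  have hmn0 : ∀ k j, 0 ≤ mn k j := fun k j => Finset.le_inf' hne _ fun i _ => (hPRS k).1 i j
  have hMx1 : ∀ k j, Mx k j ≤ 1 := fun k j =>
    Finset.sup'_le hne _ fun i _ => (hPRS k).entry_le_one i j
  have hmono : ∀ j k k', k ≤ k' → mn k j ≤ mn k' j := by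
    intro j k k' hk
    obtain ⟨m, rfl⟩ := Nat.exists_eq_add_of_le hk
    obtain ⟨l, hlen, hl, hPe⟩ := hshift m k
    have hQRS : RS l.prod := RS.listProd fun B hB => (hl B hB).1
    apply Finset.le_inf' hne
    intro i _
    rw [hPe, Matrix.mul_apply]
    exact row_lower hne hQRS (fun l' => P k l' j) i
  have hanti : ∀ j k k', k ≤ k' → Mx k' j ≤ Mx k j := by
    intro j k k' hk
    obtain ⟨m, rfl⟩ := Nat.exists_eq_add_of_le hk
    obtain ⟨l, hlen, hl, hPe⟩ := hshift m k
    have hQRS : RS l.prod := RS.listProd fun B hB => (hl B hB).1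
    apply Finset.sup'_le hne
    intro i _
    rw [hPe, Matrix.mul_apply]
    exact row_upper hne hQRS (fun l' => P k l' j) i
  set η : ℝ := ε ^ D with hηdef
  have hη0 : 0 < η := pow_pos hε D
  have hη1 : η ≤ 1 := by
    obtain ⟨l, hlen, hl, _⟩ := hshift D 0
    have hQRS : RS l.prod := RS.listProd fun B hB => (hl B hB).1
    have h := prod_entry_lb hε.le st r l hl r (by rw [hlen]; exact hreach r)
    rw [hlen] at h
    exact le_trans h (hQRS.entry_le_one r r)
  have hcontr : ∀ j k, Mx (k + D) j - mn (k + D) j ≤ (1 - η) * (Mx k j - mn k j) := by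
    intro j k
    obtain ⟨l, hlen, hl, hPe⟩ := hshift D k
    have hQRS : RS l.prod := RS.listProd fun B hB => (hl B hB).1
    have hcol : ∀ i, η ≤ l.prod i r := by
      intro i
      have h := prod_entry_lb hε.le st r l hl i (by rw [hlen]; exact hreach i)
      rwa [hlen] at h
    have h1 : Mx (k + D) j ≤ η * P k r j + (1 - η) * Mx k j := by
      apply Finset.sup'_le hne
      intro i _
      rw [hPe, Matrix.mul_apply]
      exact row_contract_upper hne hQRS hcol (fun l' => P k l' j) i
    have h2 : η * P k r j + (1 - η) * mn k j ≤ mn (k + D) j := by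
      apply Finset.le_inf' hne
      intro i _
      rw [hPe, Matrix.mul_apply]
      exact row_contract_lower hne hQRS hcol (fun l' => P k l' j) i
    calc Mx (k + D) j - mn (k + D) j
        ≤ (η * P k r j + (1 - η) * Mx k j) - (η * P k r j + (1 - η) * mn k j) :=
          sub_le_sub h1 h2
      _ = (1 - η) * (Mx k j - mn k j) := by ring
  have hgtend : ∀ j, Tendsto (fun k => Mx k j - mn k j) atTop (𝓝 0) := by
    intro j
    rcases Nat.eq_zero_or_pos D with hD | hD
    · have hir : ∀ i : Fin N, i = r := by
        intro i
        have h := hreach i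
        rw [hD] at h
        exact h
      have hz : ∀ k, Mx k j - mn k j = 0 := by
        intro k
        have h1 : Mx k j ≤ mn k j := by
          apply Finset.sup'_le hne
          intro i _
          apply Finset.le_inf' hne
          intro i' _
          rw [hir i, hir i']
        linarith [hmnMx k j]
      have : (fun k => Mx k j - mn k j) = fun _ => (0:ℝ) := funext hz
      rw [this]
      exact tendsto_const_nhds
    · have hgeo : ∀ n, Mx (D * n) j - mn (D * n) j ≤ (1 - η) ^ n * (Mx 0 j - mn 0 j) := by
        intro n
        induction n with
        | zero => simp
        | succ n ih =>
          have hDn : D * (n + 1) = D * n + D := by ring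
          rw [hDn]
          calc Mx (D * n + D) j - mn (D * n + D) j
              ≤ (1 - η) * (Mx (D * n) j - mn (D * n) j) := hcontr j (D * n)
            _ ≤ (1 - η) * ((1 - η) ^ n * (Mx 0 j - mn 0 j)) :=
              mul_le_mul_of_nonneg_left ih (by linarith)
            _ = (1 - η) ^ (n + 1) * (Mx 0 j - mn 0 j) := by ring
      have hbound : ∀ k, Mx k j - mn k j ≤ (1 - η) ^ (k / D) * (Mx 0 j - mn 0 j) := by
        intro k
        have h1 : D * (k / D) ≤ k := by
          rw [mul_comm]
          exact Nat.div_mul_le_self k D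
        have h2 : Mx k j - mn k j ≤ Mx (D * (k / D)) j - mn (D * (k / D)) j :=
          sub_le_sub (hanti j _ k h1) (hmono j _ k h1)
        exact le_trans h2 (hgeo (k / D))
      have h1 : Tendsto (fun n : ℕ => (1 - η) ^ n) atTop (𝓝 0) :=
        tendsto_pow_atTop_nhds_zero_of_lt_one (by linarith) (by linarith)
      have h2 : Tendsto (fun k : ℕ => k / D) atTop atTop :=
        tendsto_atTop_atTop.2 fun b => ⟨b * D, fun k hk => (Nat.le_div_iff_mul_le hD).2 hk⟩
      have htd : Tendsto (fun k : ℕ => (1 - η) ^ (k / D) * (Mx 0 j - mn 0 j)) atTop (𝓝 0) := by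
        simpa using (h1.comp h2).mul_const (Mx 0 j - mn 0 j)
      exact tendsto_of_tendsto_of_tendsto_of_le_of_le tendsto_const_nhds htd
        (fun k => sub_nonneg.2 (hmnMx k j)) hbound
  refine ⟨fun j => ⨆ k, mn k j, ?_⟩
  intro i j
  have hbdd : BddAbove (Set.range fun k => mn k j) := by
    refine ⟨1, ?_⟩
    rintro _ ⟨k, rfl⟩
    exact le_trans (hmnMx k j) (hMx1 k j)
  have hcle : ∀ k, mn k j ≤ ⨆ k', mn k' j := fun k => le_ciSup hbdd k
  have hcub : ∀ k, (⨆ k', mn k' j) ≤ Mx k j := by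
    intro k
    apply ciSup_le
    intro k'
    rcases le_total k' k with h | h
    · exact le_trans (hmono j k' k h) (hmnMx k j)
    · exact le_trans (hmnMx k' j) (hanti j k k' h)
  have hup : ∀ k, P k i j ≤ (⨆ k', mn k' j) + (Mx k j - mn k j) := by
    intro k
    have := hPMx k j i
    have := hcle k
    linarith
  have hlo : ∀ k, (⨆ k', mn k' j) - (Mx k j - mn k j) ≤ P k i j := by
    intro k
    have := hmnP k j i
    have := hcub k
    linarith
  have hupT : Tendsto (fun k => (⨆ k', mn k' j) + (Mx k j - mn k j)) atTop
      (𝓝 (⨆ k', mn k' j)) := by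
    simpa using tendsto_const_nhds.add (hgtend j)
  have hloT : Tendsto (fun k => (⨆ k', mn k' j) - (Mx k j - mn k j)) atTop
      (𝓝 (⨆ k', mn k' j)) := by
    simpa using tendsto_const_nhds.sub (hgtend j)
  exact tendsto_of_tendsto_of_tendsto_of_le_of_le hloT hupT hlo hup


lemma E_props (L : Mat N) (hLoff : ∀ i j, i ≠ j → L i j ≤ 0) (hLrow : ∀ i, ∑ j, L i j = 0)
    {α : ℝ} (hα0 : 0 ≤ α) (hαd : ∀ i, L i i ≤ α)
    {δmin δmax t : ℝ} (hδ0 : 0 < δmin) (ht1 : δmin ≤ t) (ht2 : t ≤ δmax) :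
    RS (NormedSpace.exp (-(t • L))) ∧
    (∀ i, Real.exp (-(δmax * α)) ≤ NormedSpace.exp (-(t • L)) i i) ∧
    (∀ i j, i ≠ j →
      Real.exp (-(δmax * α)) * (δmin * (-L i j)) ≤ NormedSpace.exp (-(t • L)) i j) := by
  have ht0 : 0 < t := lt_of_lt_of_le hδ0 ht1
  set A : Mat N := α • (1 : Mat N) - L with hA
  have hAnn : ∀ i j, 0 ≤ A i j := by
    intro i j
    by_cases h : i = j
    · subst h
      have hAe : A i i = α - L i i := by simp [hA, Matrix.one_apply]
      rw [hAe]; linarith [hαd i]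
    · have hAe : A i j = -L i j := by simp [hA, Matrix.one_apply, h]
      rw [hAe]; linarith [hLoff i j h]
  have htAnn : ∀ i j, 0 ≤ (t • A) i j := by
    intro i j
    rw [Matrix.smul_apply, smul_eq_mul]
    exact mul_nonneg ht0.le (hAnn i j)
  have hdecomp := exp_decomp L t α
  have hβ : Real.exp (-(δmax * α)) ≤ Real.exp (-(t * α)) :=
    Real.exp_le_exp.2 (neg_le_neg (mul_le_mul_of_nonneg_right ht2 hα0))
  have hβ0 : (0:ℝ) < Real.exp (-(δmax * α)) := Real.exp_pos _
  have hentry : ∀ i j, NormedSpace.exp (-(t • L)) i j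
      = Real.exp (-(t * α)) * NormedSpace.exp (t • A) i j := by
    intro i j
    rw [hdecomp, Matrix.smul_apply, smul_eq_mul]
  refine ⟨⟨?_, ?_⟩, ?_, ?_⟩
  · intro i j
    rw [hentry]
    exact mul_nonneg (Real.exp_pos _).le (exp_entry_nonneg htAnn i j)
  · intro i
    apply exp_row_sum
    intro i'
    simp only [Matrix.neg_apply, Matrix.smul_apply, smul_eq_mul]
    rw [Finset.sum_neg_distrib, ← Finset.mul_sum, hLrow i', mul_zero, neg_zero]
  · intro i
    rw [hentry]
    have h1 : (1:ℝ) ≤ NormedSpace.exp (t • A) i i := by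
      have := exp_entry_lb htAnn i i
      rw [Matrix.one_apply_eq] at this
      linarith [htAnn i i]
    calc Real.exp (-(δmax * α)) ≤ Real.exp (-(t * α)) := hβ
      _ = Real.exp (-(t * α)) * 1 := (mul_one _).symm
      _ ≤ Real.exp (-(t * α)) * NormedSpace.exp (t • A) i i :=
        mul_le_mul_of_nonneg_left h1 (Real.exp_pos _).le
  · intro i j hij
    rw [hentry]
    have hLij : 0 ≤ -L i j := neg_nonneg.2 (hLoff i j hij)
    have h1 : δmin * (-L i j) ≤ NormedSpace.exp (t • A) i j := by
      have h2 := exp_entry_lb htAnn i j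
      rw [Matrix.one_apply_ne hij] at h2
      have h3 : (t • A) i j = t * (-L i j) := by
        rw [Matrix.smul_apply, smul_eq_mul, hA, Matrix.sub_apply, Matrix.smul_apply,
          Matrix.one_apply, if_neg hij]
        simp
      rw [h3] at h2
      have h4 : δmin * (-L i j) ≤ t * (-L i j) := mul_le_mul_of_nonneg_right ht1 hLij
      linarith
    exact mul_le_mul hβ h1 (mul_nonneg hδ0.le hLij) (Real.exp_pos _).le

end CCAux

open CCAux in
/-- **Theorem 1.** Let `L` be an `N × N` Laplacian matrix and `Pe` a row stochastic
matrix with strictly positive diagonal entries, and suppose the directed graph with an edge from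
`j` to `i` whenever `i ≠ j` and (`Pe i j > 0` or `L i j < 0`) contains a directed spanning tree.
If the impulsive interval lengths `Δ k` satisfy `0 < δmin ≤ Δ k ≤ δmax`, then the left products
`∏_{i=1}^k Pe * exp (-Δ i • L)` converge to `1_N cᵀ` for some `c`, and consequently for every
initial state `x₀` the iterates converge to the consensus vector `(cᵀ x₀) 1_N`. -/
theorem clustered_network_consensus (N : ℕ) (L Pe : Matrix (Fin N) (Fin N) ℝ)
    (hLoff : ∀ i j : Fin N, i ≠ j → L i j ≤ 0)
    (hLrow : ∀ i : Fin N, ∑ j, L i j = 0)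
    (hPnn : ∀ i j : Fin N, 0 ≤ Pe i j)
    (hProw : ∀ i : Fin N, ∑ j, Pe i j = 1)
    (hPdiag : ∀ i : Fin N, 0 < Pe i i)
    (htree : ∃ r : Fin N, ∀ i : Fin N,
      Relation.ReflTransGen (fun j i : Fin N => i ≠ j ∧ (0 < Pe i j ∨ L i j < 0)) r i)
    (Δ : ℕ → ℝ) (δmin δmax : ℝ) (hδmin : 0 < δmin)
    (hΔ : ∀ k : ℕ, δmin ≤ Δ k ∧ Δ k ≤ δmax) :
    ∃ c : Fin N → ℝ,
      Tendsto
        (fun k : ℕ =>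
          ((List.range k).reverse.map fun i => Pe * NormedSpace.exp (-(Δ i • L))).prod)
        atTop (𝓝 (Matrix.of fun _ j : Fin N => c j)) ∧
      ∀ x₀ : Fin N → ℝ,
        Tendsto
          (fun k : ℕ =>
            (((List.range k).reverse.map fun i =>
              Pe * NormedSpace.exp (-(Δ i • L))).prod).mulVec x₀)
          atTop (𝓝 (fun _ : Fin N => c ⬝ᵥ x₀)) := by
  classical
  rcases Nat.eq_zero_or_pos N with hN0 | hN
  · subst hN0
    refine ⟨fun _ => 0, ?_, ?_⟩
    · have hsub : ∀ A B : Matrix (Fin 0) (Fin 0) ℝ, A = B := by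
        intro A B; ext i j; exact i.elim0
      have heq : (fun k : ℕ =>
          ((List.range k).reverse.map fun i => Pe * NormedSpace.exp (-(Δ i • L))).prod)
          = fun _ => (Matrix.of fun _ j : Fin 0 => (0:ℝ)) := funext fun k => hsub _ _
      rw [heq]
      exact tendsto_const_nhds
    · intro x₀
      have hsub : ∀ v w : Fin 0 → ℝ, v = w := by
        intro v w; funext i; exact i.elim0
      have heq : (fun k : ℕ =>
          (((List.range k).reverse.map fun i =>
            Pe * NormedSpace.exp (-(Δ i • L))).prod).mulVec x₀)
          = fun _ => (fun _ : Fin 0 => (fun _ : Fin 0 => (0:ℝ)) ⬝ᵥ x₀) := funext fun k => hsub _ _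
      rw [heq]
      exact tendsto_const_nhds
  · obtain ⟨r, hr⟩ := htree
    have hne : (Finset.univ : Finset (Fin N)).Nonempty := ⟨⟨0, hN⟩, Finset.mem_univ _⟩
    set α : ℝ := (Finset.univ.sup' hne fun i => L i i) ⊔ 0 with hα
    have hα0 : 0 ≤ α := le_sup_right
    have hαd : ∀ i, L i i ≤ α := fun i =>
      le_trans (Finset.le_sup' (fun i => L i i) (Finset.mem_univ i)) le_sup_left
    set β : ℝ := Real.exp (-(δmax * α)) with hβ
    have hβ0 : 0 < β := Real.exp_pos _
    set E : ℕ → Mat N := fun k => NormedSpace.exp (-(Δ k • L)) with hE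
    have hEp : ∀ k, RS (E k) ∧ (∀ i, β ≤ E k i i) ∧
        (∀ i j, i ≠ j → β * (δmin * (-L i j)) ≤ E k i j) := fun k =>
      E_props L hLoff hLrow hα0 hαd hδmin (hΔ k).1 (hΔ k).2
    set Mk : ℕ → Mat N := fun k => Pe * E k with hMk
    have hPeRS : RS Pe := ⟨hPnn, hProw⟩
    have hMRS : ∀ k, RS (Mk k) := fun k => hPeRS.mul (hEp k).1
    set st : Fin N → Fin N → Prop :=
      fun j i => i = j ∨ (i ≠ j ∧ (0 < Pe i j ∨ L i j < 0)) with hst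
    have hstrefl : ∀ i, st i i := fun i => Or.inl rfl
    have hMapply : ∀ k i j, Mk k i j = ∑ l, Pe i l * E k l j := by
      intro k i j
      simp only [hMk]
      rw [Matrix.mul_apply]
    have hb1 : ∀ k i j, Pe i j * β ≤ Mk k i j := by
      intro k i j
      rw [hMapply]
      calc Pe i j * β ≤ Pe i j * E k j j :=
            mul_le_mul_of_nonneg_left ((hEp k).2.1 j) (hPnn i j)
        _ ≤ ∑ l, Pe i l * E k l j :=
            Finset.single_le_sum (fun l _ => mul_nonneg (hPnn i l) ((hEp k).1.1 l j))
              (Finset.mem_univ j)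
    have hb2 : ∀ k i j, i ≠ j → Pe i i * (β * (δmin * (-L i j))) ≤ Mk k i j := by
      intro k i j hij
      rw [hMapply]
      calc Pe i i * (β * (δmin * (-L i j))) ≤ Pe i i * E k i j :=
            mul_le_mul_of_nonneg_left ((hEp k).2.2 i j hij) (hPnn i i)
        _ ≤ ∑ l, Pe i l * E k l j :=
            Finset.single_le_sum (fun l _ => mul_nonneg (hPnn i l) ((hEp k).1.1 l j))
              (Finset.mem_univ i)
    set ψ : Fin N → Fin N → ℝ := fun i j =>
      max (Pe i j * β) (if i = j then Pe i i * β else Pe i i * (β * (δmin * (-L i j)))) with hψ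
    set pf : Fin N × Fin N → ℝ := fun p => if st p.2 p.1 then ψ p.1 p.2 else 1 with hpf
    have hne2 : (Finset.univ : Finset (Fin N × Fin N)).Nonempty := ⟨(r, r), Finset.mem_univ _⟩
    set ε : ℝ := Finset.univ.inf' hne2 pf with hεdef
    have hψpos : ∀ i j, st j i → 0 < ψ i j := by
      intro i j hstij
      rcases hstij with h | ⟨hne', h⟩
      · subst h
        refine lt_of_lt_of_le (mul_pos (hPdiag i) hβ0) ?_
        have : ψ i i = max (Pe i i * β) (Pe i i * β) := by simp [hψ]
        rw [this]
        exact le_max_right _ _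
      · rcases h with h | h
        · exact lt_of_lt_of_le (mul_pos h hβ0) (le_trans (le_refl _) (le_max_left _ _))
        · refine lt_of_lt_of_le ?_ (le_max_right _ _)
          rw [if_neg hne']
          have hL : 0 < -L i j := neg_pos.2 h
          have := hPdiag i
          positivity
    have hεpos : 0 < ε := by
      rw [hεdef]
      rw [Finset.lt_inf'_iff]
      intro p _
      by_cases h : st p.2 p.1
      · simp only [hpf, if_pos h]
        exact hψpos p.1 p.2 h
      · simp only [hpf, if_neg h]
        exact one_pos
    have hεle : ∀ k i j, st j i → ε ≤ Mk k i j := by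
      intro k i j h
      have h1 : ε ≤ pf (i, j) := Finset.inf'_le pf (Finset.mem_univ (i, j))
      rw [hpf] at h1
      simp only [if_pos h] at h1
      refine le_trans h1 (max_le (hb1 k i j) ?_)
      by_cases hij : i = j
      · subst hij
        rw [if_pos rfl]
        exact hb1 k i i
      · rw [if_neg hij]
        exact hb2 k i j hij
    have hexists : ∀ i, ∃ d, Reach st r d i := fun i =>
      reach_of_rtg (fun j i h => Or.inr h) (hr i)
    choose d hd using hexists
    set D : ℕ := Finset.univ.sup d with hD
    have hreach : ∀ i, Reach st r D i := fun i =>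
      Reach.mono hstrefl (Finset.le_sup (Finset.mem_univ i)) (hd i)
    obtain ⟨c, hc⟩ := converge hN Mk hεpos st
      (fun k => ⟨hMRS k, fun i j h => hεle k i j h⟩) r D hreach
    refine ⟨c, ?_, ?_⟩
    · erw [tendsto_pi_nhds]
      intro i
      rw [tendsto_pi_nhds]
      intro j
      exact hc i j
    · intro x₀
      rw [tendsto_pi_nhds]
      intro i
      have hrw : (fun k : ℕ =>
          (((List.range k).reverse.map fun i' =>
            Pe * NormedSpace.exp (-(Δ i' • L))).prod).mulVec x₀ i)
          = fun k : ℕ => ∑ j, ((List.range k).reverse.map fun i' =>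
            Pe * NormedSpace.exp (-(Δ i' • L))).prod i j * x₀ j := by
        funext k
        rw [Matrix.mulVec, dotProduct]
      rw [hrw]
      exact tendsto_finset_sum _ fun j _ => (hc i j).mul_const (x₀ j)
end

section
/- Let α > 0 and 0 < β < 1, let t_0 < t_1 < t_2 < ⋯ be a strictly increasing unbounded sequence, and let V : ℝ → ℝ be a nonnegative function such that: (i) on each interval (t_k, t_{k+1}), V is differentiable with V'(t) ≤ -α V(t), and V is continuous from the left at t_{k+1} (so V(t_{k+1}) equals its limit from within the interval); (ii) at each reset time t_k (k ≥ 1), the right limit V(t_k⁺) satisfies V(t_k⁺) ≤ β V(t_k); (iii) V(t_0⁺) ≤ V_0. Then for every k ≥ 0 and every t ∈ (t_k, t_{k+1}], V(t) ≤ V_0 · β^k · e^{-α (t - t_0)}. -/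
open Filter Topology

lemma impulsive_key (α : ℝ) (a b : ℝ) (hab : a < b) (V : ℝ → ℝ)
    (W : ℝ) (hW : Tendsto V (𝓝[>] a) (𝓝 W))
    (hderiv : ∀ s ∈ Set.Ioo a b, ∃ d : ℝ, HasDerivAt V d s ∧ d ≤ -α * V s)
    (hleft : ContinuousWithinAt V (Set.Iio b) b) :
    ∀ s ∈ Set.Ioc a b, V s ≤ W * Real.exp (-α * (s - a)) := by
  set g : ℝ → ℝ := fun s => V s * Real.exp (α * s) with hg
  have hexp : ∀ x : ℝ, HasDerivAt (fun y => Real.exp (α * y)) (Real.exp (α * x) * α) x := by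
    intro x
    simpa using ((hasDerivAt_id x).const_mul α).exp
  have hVcont : ContinuousOn V (Set.Ioc a b) := by
    intro x hx
    rcases lt_or_eq_of_le hx.2 with h | h
    · obtain ⟨d, hd, -⟩ := hderiv x ⟨hx.1, h⟩
      exact hd.continuousAt.continuousWithinAt
    · subst h
      have : ContinuousWithinAt V (insert x (Set.Iio x)) x := hleft.insert
      exact this.mono (by intro y hy; rcases eq_or_lt_of_le hy.2 with h'|h' <;> simp [h', le_of_lt])
  have hgd : ∀ x ∈ Set.Ioo a b, ∃ d, HasDerivAt g (d * Real.exp (α * x) + V x * (Real.exp (α * x) * α)) x ∧ d ≤ -α * V x := by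
    intro x hx
    obtain ⟨d, hd, hdle⟩ := hderiv x hx
    exact ⟨d, hd.mul (hexp x), hdle⟩
  have hganti : AntitoneOn g (Set.Ioc a b) := by
    apply antitoneOn_of_deriv_nonpos (convex_Ioc a b)
    · exact hVcont.mul (Real.continuous_exp.comp (continuous_const.mul continuous_id)).continuousOn
    · intro x hx
      rw [interior_Ioc] at hx
      obtain ⟨d, hd, -⟩ := hgd x hx
      exact hd.differentiableAt.differentiableWithinAt
    · intro x hx
      rw [interior_Ioc] at hx
      obtain ⟨d, hd, hdle⟩ := hgd x hx
      rw [hd.deriv]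
      have he := (Real.exp_pos (α * x)).le
      nlinarith [mul_le_mul_of_nonneg_right hdle he]
  intro s hs
  have hgW : Tendsto g (𝓝[>] a) (𝓝 (W * Real.exp (α * a))) := by
    exact hW.mul (((Real.continuous_exp.comp (continuous_const.mul continuous_id)).tendsto a).mono_left nhdsWithin_le_nhds)
  have hev : ∀ᶠ x in 𝓝[>] a, g s ≤ g x := by
    filter_upwards [Ioo_mem_nhdsGT_of_mem (Set.left_mem_Ico.2 hs.1)] with x hx
    exact hganti ⟨hx.1, hx.2.le.trans hs.2⟩ hs hx.2.le
  have h1 : g s ≤ W * Real.exp (α * a) := ge_of_tendsto hgW hev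
  have h2 := mul_le_mul_of_nonneg_right h1 (Real.exp_pos (-(α * s))).le
  have e1 : g s * Real.exp (-(α * s)) = V s := by
    simp [hg, mul_assoc, ← Real.exp_add]
  have e2 : W * Real.exp (α * a) * Real.exp (-(α * s)) = W * Real.exp (-α * (s - a)) := by
    rw [mul_assoc, ← Real.exp_add]; ring_nf
  rw [e1, e2] at h2
  exact h2

/-- A nonnegative function `V` which decays at rate `α` between the reset
times `t 0 < t 1 < ⋯` (i.e. `V' ≤ -α V` on each open interval, with left continuity at the
interval right endpoints), contracts by a factor `β ∈ (0,1)` at each reset time (`Vp k` denotes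
the right limit of `V` at `t k`), and starts below `V₀` (i.e. `Vp 0 ≤ V₀`), satisfies
`V s ≤ V₀ βᵏ e^{-α (s - t 0)}` for every `k` and every `s ∈ (t k, t (k+1)]`. -/
theorem impulsive_lyapunov_exponential_decay (α β : ℝ) (hα : 0 < α)
    (hβ0 : 0 < β) (hβ1 : β < 1)
    (t : ℕ → ℝ) (hmono : StrictMono t) (hunb : Tendsto t atTop atTop)
    (V : ℝ → ℝ) (hVnn : ∀ s : ℝ, 0 ≤ V s)
    (Vp : ℕ → ℝ) (V₀ : ℝ)
    (hVp : ∀ k : ℕ, Tendsto V (𝓝[>] (t k)) (𝓝 (Vp k)))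
    (hderiv : ∀ k : ℕ, ∀ s ∈ Set.Ioo (t k) (t (k + 1)),
      ∃ d : ℝ, HasDerivAt V d s ∧ d ≤ -α * V s)
    (hleft : ∀ k : ℕ, ContinuousWithinAt V (Set.Iio (t (k + 1))) (t (k + 1)))
    (hjump : ∀ k : ℕ, 1 ≤ k → Vp k ≤ β * V (t k))
    (hinit : Vp 0 ≤ V₀) :
    ∀ k : ℕ, ∀ s ∈ Set.Ioc (t k) (t (k + 1)),
      V s ≤ V₀ * β ^ k * Real.exp (-α * (s - t 0)) := by

  have hkey : ∀ k : ℕ, ∀ s ∈ Set.Ioc (t k) (t (k + 1)),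
      V s ≤ Vp k * Real.exp (-α * (s - t k)) := fun k =>
    impulsive_key α (t k) (t (k+1)) (hmono (Nat.lt_succ_self k)) V (Vp k) (hVp k)
      (hderiv k) (hleft k)
  have hbound : ∀ k : ℕ, Vp k ≤ V₀ * β ^ k * Real.exp (-α * (t k - t 0)) := by
    intro k
    induction k with
    | zero => simpa using hinit
    | succ k ih =>
      have h1 : Vp (k+1) ≤ β * V (t (k+1)) := hjump (k+1) (Nat.succ_le_succ (Nat.zero_le k))
      have h2 : V (t (k+1)) ≤ Vp k * Real.exp (-α * (t (k+1) - t k)) :=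
        hkey k (t (k+1)) ⟨hmono (Nat.lt_succ_self k), le_refl _⟩
      have h3 := mul_le_mul_of_nonneg_right ih (Real.exp_pos (-α * (t (k+1) - t k))).le
      have e : V₀ * β ^ k * Real.exp (-α * (t k - t 0)) * Real.exp (-α * (t (k+1) - t k))
          = V₀ * β ^ k * Real.exp (-α * (t (k+1) - t 0)) := by
        rw [mul_assoc, ← Real.exp_add]; ring_nf
      rw [e] at h3
      calc Vp (k+1) ≤ β * V (t (k+1)) := h1
        _ ≤ β * (Vp k * Real.exp (-α * (t (k+1) - t k))) :=
            mul_le_mul_of_nonneg_left h2 hβ0.le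
        _ ≤ β * (V₀ * β ^ k * Real.exp (-α * (t (k+1) - t 0))) :=
            mul_le_mul_of_nonneg_left h3 hβ0.le
        _ = V₀ * β ^ (k+1) * Real.exp (-α * (t (k+1) - t 0)) := by ring
  intro k s hs
  have h1 := hkey k s hs
  have h2 := mul_le_mul_of_nonneg_right (hbound k) (Real.exp_pos (-α * (s - t k))).le
  have e : V₀ * β ^ k * Real.exp (-α * (t k - t 0)) * Real.exp (-α * (s - t k))
      = V₀ * β ^ k * Real.exp (-α * (s - t 0)) := by
    rw [mul_assoc, ← Real.exp_add]; ring_nf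
  rw [e] at h2
  exact h1.trans h2
end

section
/- Let α > 0 and 0 < β < 1, let t_0 < t_1 < ⋯ < t_k < T, and let V : [t_0, T] → ℝ be a nonnegative function and g : [t_0, T] → ℝ an integrable function such that: (i) V(t_0⁺) = 0 (zero initial condition); (ii) on each interval (t_v, t_{v+1}) (with t_{k+1} := T), V is differentiable and satisfies V'(t) + α V(t) + g(t) < 0, and V is continuous from the left at each t_{v+1}; (iii) at each reset time t_v (1 ≤ v ≤ k), the right limit satisfies V(t_v⁺) ≤ β V(t_v). Then ∫_{t_0}^{T} g(t) dt < 0. -/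
open Filter Topology intervalIntegral

open Set MeasureTheory in
/-- Key single-interval estimate: if `V' + αV + g < 0` on `(a,b)`, `V ≥ 0`, with right limit
`Va` at `a` and left continuity at `b`, then `∫_a^b g < Va - V b`. -/
lemma key_interval (α : ℝ) (hα : 0 < α) (a b Va : ℝ) (hab : a < b)
    (V g : ℝ → ℝ) (hVnn : ∀ s : ℝ, 0 ≤ V s)
    (hg : IntervalIntegrable g volume a b)
    (hVa : Tendsto V (𝓝[>] a) (𝓝 Va))
    (hd : ∀ s ∈ Set.Ioo a b, ∃ d : ℝ, HasDerivAt V d s ∧ d + α * V s + g s < 0)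
    (hl : ContinuousWithinAt V (Set.Iio b) b) :
    ∫ s in a..b, g s < Va - V b := by
  classical
  choose! d hdV hdlt using hd
  set W : ℝ → ℝ := fun x => if x = a then Va else V x with hWdef
  have hWne : ∀ x, x ≠ a → W x = V x := fun x hx => if_neg hx
  have hWa : W a = Va := if_pos rfl
  have hWb : W b = V b := hWne b (ne_of_gt hab)
  have hWV_ev : ∀ x ∈ Ioo a b, W =ᶠ[𝓝 x] V := fun x hx =>
    (isOpen_Ioo.eventually_mem hx).mono fun y hy => hWne y (ne_of_gt hy.1)
  -- continuity of W on [a, b]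
  have hWcont : ContinuousOn W (Icc a b) := by
    intro x hx
    rcases eq_or_ne x a with rfl | hxa
    · -- at the left endpoint
      have h1 : Tendsto W (𝓝[>] x) (𝓝 Va) := by
        refine hVa.congr' ?_
        filter_upwards [eventually_mem_nhdsWithin] with y hy
        exact (hWne y (ne_of_gt hy)).symm
      have h2 : 𝓝[Icc x b] x ≤ 𝓝[insert x (Ioi x)] x :=
        nhdsWithin_mono _ (fun y hy => by rcases eq_or_lt_of_le hy.1 with h | h
                                          · exact Or.inl h.symm
                                          · exact Or.inr h)
      rw [nhdsWithin_insert] at h2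
      have h3 : Tendsto W (pure x ⊔ 𝓝[>] x) (𝓝 Va) := by
        refine Tendsto.sup ?_ h1
        simpa [hWa] using (tendsto_pure_nhds W x)
      unfold ContinuousWithinAt
      rw [hWa]
      exact h3.mono_left h2
    rcases eq_or_ne x b with rfl | hxb
    · -- at the right endpoint
      have h1 : Tendsto W (𝓝[<] x) (𝓝 (V x)) := by
        refine hl.congr' ?_
        filter_upwards [mem_nhdsWithin_of_mem_nhds (isOpen_Ioi.mem_nhds hab)] with y hy
        exact (hWne y (ne_of_gt hy)).symm
      have h2 : 𝓝[Icc a x] x ≤ 𝓝[insert x (Iio x)] x :=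
        nhdsWithin_mono _ (fun y hy => by rcases eq_or_lt_of_le hy.2 with h | h
                                          · exact Or.inl h
                                          · exact Or.inr h)
      rw [nhdsWithin_insert] at h2
      have h3 : Tendsto W (pure x ⊔ 𝓝[<] x) (𝓝 (V x)) := by
        refine Tendsto.sup ?_ h1
        simpa [hWb] using (tendsto_pure_nhds W x)
      unfold ContinuousWithinAt
      rw [hWb]
      exact h3.mono_left h2
    · have hx' : x ∈ Ioo a b := ⟨hx.1.lt_of_ne (Ne.symm hxa), hx.2.lt_of_ne hxb⟩
      exact (((hdV x hx').continuousAt).congr (hWV_ev x hx').symm).continuousWithinAt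
  -- derivative of W on (a,b)
  have hWd : ∀ x ∈ Ioo a b, HasDerivWithinAt W (d x) (Ioi x) x := fun x hx =>
    ((hdV x hx).congr_of_eventuallyEq (hWV_ev x hx)).hasDerivWithinAt
  -- integrability
  have hVint : IntervalIntegrable V volume a b := by
    rw [intervalIntegrable_iff_integrableOn_Ioc_of_le hab.le]
    exact ((hWcont.integrableOn_Icc).mono_set Ioc_subset_Icc_self).congr_fun
      (fun x hx => hWne x (ne_of_gt hx.1)) measurableSet_Ioc
  set φ : ℝ → ℝ := fun s => -g s - α * V s with hφdef
  have hφ : IntervalIntegrable φ volume a b := hg.neg.sub (hVint.const_mul α)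
  have hφint : IntegrableOn φ (Icc a b) volume := by
    rw [integrableOn_Icc_iff_integrableOn_Ioc]
    exact (intervalIntegrable_iff_integrableOn_Ioc_of_le hab.le).1 hφ
  have key : W b - W a ≤ ∫ y in a..b, φ y :=
    sub_le_integral_of_hasDeriv_right_of_le hab.le hWcont hWd hφint
      (fun x hx => by have := hdlt x hx; simp only [hφdef]; linarith)
  have hsplit : ∫ y in a..b, φ y = -(∫ y in a..b, g y) - α * ∫ y in a..b, V y := by
    have h1 := intervalIntegral.integral_sub hg.neg (hVint.const_mul α)
    simpa [hφdef, intervalIntegral.integral_neg, intervalIntegral.integral_const_mul] using h1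
  have hInn : 0 ≤ ∫ y in a..b, V y :=
    intervalIntegral.integral_nonneg hab.le fun u _ => hVnn u
  rw [hWa, hWb, hsplit] at key
  rcases hInn.lt_or_eq with hI | hI
  · nlinarith
  · -- degenerate case: ∫ V = 0, so V = 0 on (a,b) and g < 0 there
    have hIoc : ∫ y in Ioc a b, V y = 0 := by
      rw [← intervalIntegral.integral_of_le hab.le]; exact hI.symm
    have hVintIoc : IntegrableOn V (Ioc a b) volume :=
      (intervalIntegrable_iff_integrableOn_Ioc_of_le hab.le).1 hVint
    have hae : V =ᵐ[volume.restrict (Ioc a b)] 0 :=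
      (setIntegral_eq_zero_iff_of_nonneg_ae (ae_of_all _ fun x => hVnn x) hVintIoc).1 hIoc
    have hnull : volume ({y | V y ≠ 0} ∩ Ioc a b) = 0 := by
      have h := hae
      rw [Filter.EventuallyEq, ae_iff] at h
      rwa [Measure.restrict_apply' measurableSet_Ioc] at h
    have hV0 : ∀ x ∈ Ioo a b, V x = 0 := by
      intro x hx
      by_contra hne
      have hpos : 0 < V x := (hVnn x).lt_of_ne (Ne.symm hne)
      have hcont : ContinuousAt V x := (hdV x hx).continuousAt
      have h1 : ∀ᶠ y in 𝓝 x, 0 < V y := hcont.eventually (eventually_gt_nhds hpos)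
      have h2 : ∀ᶠ y in 𝓝 x, y ∈ Ioo a b := isOpen_Ioo.eventually_mem hx
      have h3 : {y | V y ≠ 0} ∩ Ioc a b ∈ 𝓝 x := by
        filter_upwards [h1, h2] with y hy1 hy2
        exact ⟨ne_of_gt hy1, Ioo_subset_Ioc_self hy2⟩
      exact absurd hnull (ne_of_gt (Measure.measure_pos_of_mem_nhds _ h3))
    have hg0 : ∀ x ∈ Ioo a b, g x < 0 := by
      intro x hx
      have hEq : V =ᶠ[𝓝 x] fun _ => (0 : ℝ) :=
        (isOpen_Ioo.eventually_mem hx).mono fun y hy => hV0 y hy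
      have hd0 : HasDerivAt (fun _ : ℝ => (0 : ℝ)) (d x) x :=
        (hdV x hx).congr_of_eventuallyEq hEq.symm
      have hdx : d x = 0 := hd0.unique (hasDerivAt_const x 0)
      have := hdlt x hx
      rw [hV0 x hx, hdx] at this
      linarith
    have hgneg : ∫ s in a..b, g s < 0 := by
      have : 0 < ∫ s in a..b, -g s :=
        intervalIntegral_pos_of_pos_on hg.neg (fun x hx => neg_pos.2 (hg0 x hx)) hab
      rw [intervalIntegral.integral_neg] at this
      linarith
    have hVb : V b = 0 := by
      have h2 : Tendsto V (𝓝[<] b) (𝓝 0) := by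
        have hev : (fun _ : ℝ => (0 : ℝ)) =ᶠ[𝓝[<] b] V := by
          filter_upwards [eventually_mem_nhdsWithin,
            mem_nhdsWithin_of_mem_nhds (isOpen_Ioi.mem_nhds hab)] with y hy1 hy2
          exact (hV0 y ⟨hy2, hy1⟩).symm
        exact tendsto_const_nhds.congr' hev
      exact tendsto_nhds_unique hl h2
    have hVann : 0 ≤ Va := ge_of_tendsto hVa (Eventually.of_forall fun x => hVnn x)
    rw [hVb]
    linarith

/-- Let `V ≥ 0` with zero initial condition (right limit `Vp 0 = 0` at `t 0`)
satisfy `V' + α V + g < 0` on each interval `(t v, t (v+1))` (for `v ≤ k`, where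
`t (k+1) = T`), with left continuity at the right endpoints, and contract by a factor
`β ∈ (0,1)` at each reset time `t v`, `1 ≤ v ≤ k` (`Vp v` denotes the right limit of `V` at
`t v`).  Then `∫_{t 0}^{T} g < 0`. -/
theorem performance_index_negative (α β : ℝ) (hα : 0 < α) (hβ0 : 0 < β) (hβ1 : β < 1)
    (k : ℕ) (t : ℕ → ℝ) (T : ℝ)
    (hmono : ∀ v : ℕ, v ≤ k → t v < t (v + 1))
    (hT : t (k + 1) = T)
    (V g : ℝ → ℝ) (hVnn : ∀ s : ℝ, 0 ≤ V s)
    (hg : IntervalIntegrable g MeasureTheory.volume (t 0) T)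
    (Vp : ℕ → ℝ)
    (hVp : ∀ v : ℕ, v ≤ k → Tendsto V (𝓝[>] (t v)) (𝓝 (Vp v)))
    (hVp0 : Vp 0 = 0)
    (hderiv : ∀ v : ℕ, v ≤ k → ∀ s ∈ Set.Ioo (t v) (t (v + 1)),
      ∃ d : ℝ, HasDerivAt V d s ∧ d + α * V s + g s < 0)
    (hleft : ∀ v : ℕ, v ≤ k → ContinuousWithinAt V (Set.Iio (t (v + 1))) (t (v + 1)))
    (hjump : ∀ v : ℕ, 1 ≤ v → v ≤ k → Vp v ≤ β * V (t v)) :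
    ∫ s in (t 0)..T, g s < 0 := by
  classical
  have hmm : ∀ u v : ℕ, u ≤ v → v ≤ k + 1 → t u ≤ t v := by
    intro u v huv hvk
    induction huv with
    | refl => exact le_rfl
    | @step m h ih =>
        exact (ih (by omega)).trans (hmono m (by omega)).le
  have ht0T : t 0 ≤ T := hT ▸ hmm 0 (k + 1) (Nat.zero_le _) le_rfl
  have hint : ∀ v : ℕ, v ≤ k →
      IntervalIntegrable g MeasureTheory.volume (t v) (t (v + 1)) := by
    intro v hv
    apply hg.mono_set
    rw [Set.uIcc_of_le ht0T, Set.uIcc_of_le (hmono v hv).le]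
    exact Set.Icc_subset_Icc (hmm 0 v (Nat.zero_le _) (by omega))
      (hT ▸ hmm (v + 1) (k + 1) (by omega) le_rfl)
  have hsum : ∑ v ∈ Finset.range (k + 1), ∫ s in (t v)..(t (v + 1)), g s
      = ∫ s in (t 0)..(t (k + 1)), g s :=
    intervalIntegral.sum_integral_adjacent_intervals fun v hv =>
      hint v (Nat.lt_succ_iff.1 hv)
  have hkey : ∀ v : ℕ, v ≤ k →
      ∫ s in (t v)..(t (v + 1)), g s < Vp v - V (t (v + 1)) := fun v hv =>
    key_interval α hα (t v) (t (v + 1)) (Vp v) (hmono v hv) V g hVnn (hint v hv)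
      (hVp v hv) (hderiv v hv) (hleft v hv)
  have h1 : ∑ v ∈ Finset.range (k + 1), ∫ s in (t v)..(t (v + 1)), g s
      < ∑ v ∈ Finset.range (k + 1), (Vp v - V (t (v + 1))) :=
    Finset.sum_lt_sum_of_nonempty (Finset.nonempty_range_iff.2 (Nat.succ_ne_zero k))
      fun v hv => hkey v (Nat.lt_succ_iff.1 (Finset.mem_range.1 hv))
  set u : ℕ → ℝ := fun v => if v = 0 then 0 else V (t v) with hudef
  have h2 : ∀ v ∈ Finset.range (k + 1), Vp v - V (t (v + 1)) ≤ u v - u (v + 1) := by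
    intro v hv
    have hv' : v ≤ k := Nat.lt_succ_iff.1 (Finset.mem_range.1 hv)
    by_cases h0 : v = 0
    · subst h0
      simp [hudef, hVp0]
    · have hj := hjump v (Nat.one_le_iff_ne_zero.2 h0) hv'
      have hb : β * V (t v) ≤ V (t v) := by nlinarith [hVnn (t v)]
      simp only [hudef, if_neg h0, if_neg (Nat.succ_ne_zero v)]
      linarith
  have h3 : ∑ v ∈ Finset.range (k + 1), (Vp v - V (t (v + 1)))
      ≤ ∑ v ∈ Finset.range (k + 1), (u v - u (v + 1)) := Finset.sum_le_sum h2
  have h4 : ∑ v ∈ Finset.range (k + 1), (u v - u (v + 1)) = u 0 - u (k + 1) :=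
    Finset.sum_range_sub' u (k + 1)
  have h5 : u 0 = 0 := by simp [hudef]
  have h6 : u (k + 1) = V T := by simp [hudef, hT]
  have := hVnn T
  rw [hT] at hsum
  linarith [h1, h3]
end

section
/- (Theorem 2, part 2) Let L, P_e ∈ ℝ^{N×N}, let P be an N×N symmetric positive definite matrix, and let α > 0, ρ > 0, 0 < β < 1 satisfy the two negative-definiteness conditions: [[-P L - Lᵀ P + α P, P], [Pᵀ, -ρ² I_N]] ≺ 0 and [[-β P, P_eᵀ], [P_e, -P⁻¹]] ≺ 0. Let t_0 < t_1 < t_2 < ⋯ be reset times with average impulsive interval T̄ and chatter bound N_0, meaning that the number k of reset times in (t_0, t] satisfies k ≥ (t - t_0)/T̄ - N_0 for all t > t_0, and suppose α > (ln β)/T̄. Let ψ : ℝ → ℝ^N satisfy ψ'(t) = -L ψ(t) on each interval (t_k, t_{k+1}) (left-continuous at interval right endpoints) and ψ(t_k⁺) = P_e ψ(t_k) at each reset time. Then V(t) = ψ(t)ᵀ P ψ(t) satisfies V(t) ≤ V(t_0⁺) · β^{-N_0} · e^{-(α - (ln β)/T̄)(t - t_0)} for all t > t_0; in particular ψ(t)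 → 0 exponentially with convergence rate η = α - (ln β)/T̄. -/
open Matrix Filter Topology

lemma quad_deriv' {N : ℕ} (P : Matrix (Fin N) (Fin N) ℝ) {ψ : ℝ → Fin N → ℝ}
    {d : Fin N → ℝ} {s : ℝ} (h : HasDerivAt ψ d s) :
    HasDerivAt (fun u => ψ u ⬝ᵥ P.mulVec (ψ u))
      (d ⬝ᵥ P.mulVec (ψ s) + ψ s ⬝ᵥ P.mulVec d) s := by
  have hi := hasDerivAt_pi.mp h
  have key : ∀ i j, HasDerivAt (fun u => ψ u i * (P i j * ψ u j))
      (d i * (P i j * ψ s j) + ψ s i * (P i j * d j)) s := by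
    intro i j
    exact (hi i).mul ((hi j).const_mul (P i j))
  have H : HasDerivAt (fun u => ∑ i, ∑ j, ψ u i * (P i j * ψ u j))
      (∑ i, ∑ j, (d i * (P i j * ψ s j) + ψ s i * (P i j * d j))) s :=
    HasDerivAt.fun_sum fun i _ => HasDerivAt.fun_sum fun j _ => key i j
  have e1 : (fun u => ψ u ⬝ᵥ P.mulVec (ψ u)) = fun u => ∑ i, ∑ j, ψ u i * (P i j * ψ u j) := by
    funext u; simp [dotProduct, mulVec, Finset.mul_sum]
  have e2 : d ⬝ᵥ P.mulVec (ψ s) + ψ s ⬝ᵥ P.mulVec d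
      = ∑ i, ∑ j, (d i * (P i j * ψ s j) + ψ s i * (P i j * d j)) := by
    simp [dotProduct, mulVec, Finset.mul_sum, Finset.sum_add_distrib]
  rw [e1, e2]; exact H

lemma gron' {N : ℕ} {P L : Matrix (Fin N) (Fin N) ℝ} {α : ℝ}
    (hquad : ∀ y : Fin N → ℝ, (-(L.mulVec y)) ⬝ᵥ P.mulVec y + y ⬝ᵥ P.mulVec (-(L.mulVec y))
      ≤ -α * (y ⬝ᵥ P.mulVec y))
    {ψ : ℝ → Fin N → ℝ} {a b : ℝ} (hab : a < b) {v : Fin N → ℝ}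
    (hlim : Tendsto ψ (𝓝[>] a) (𝓝 v))
    (hd : ∀ s ∈ Set.Ioo a b, HasDerivAt ψ (-(L.mulVec (ψ s))) s)
    (hc : ContinuousWithinAt ψ (Set.Iio b) b) :
    ∀ s ∈ Set.Ioc a b,
      ψ s ⬝ᵥ P.mulVec (ψ s) ≤ (v ⬝ᵥ P.mulVec v) * Real.exp (-α * (s - a)) := by
  have cont : Continuous (fun y : Fin N → ℝ => y ⬝ᵥ P.mulVec y) := by
    simp only [dotProduct, mulVec]
    exact continuous_finset_sum _ fun i _ => (continuous_apply i).mul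
      (continuous_finset_sum _ fun j _ => continuous_const.mul (continuous_apply j))
  set g : ℝ → ℝ := fun u => (ψ u ⬝ᵥ P.mulVec (ψ u)) * Real.exp (α * (u - a)) with hgdef
  have hg : ∀ x ∈ Set.Ioo a b, HasDerivAt g
      (((-(L.mulVec (ψ x))) ⬝ᵥ P.mulVec (ψ x) + ψ x ⬝ᵥ P.mulVec (-(L.mulVec (ψ x)))
        + α * (ψ x ⬝ᵥ P.mulVec (ψ x))) * Real.exp (α * (x - a))) x := by
    intro x hx
    have h1 := quad_deriv' P (hd x hx)
    have h2 : HasDerivAt (fun u => Real.exp (α * (u - a))) (α * Real.exp (α * (x - a))) x := by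
      have h3 : HasDerivAt (fun u : ℝ => α * (u - a)) α x := by
        simpa using ((hasDerivAt_id x).sub_const a).const_mul α
      simpa [mul_comm] using h3.exp
    have := h1.fun_mul h2
    refine this.congr_deriv ?_
    ring
  have hcont : ContinuousOn g (Set.Ioc a b) := by
    intro x hx
    rcases eq_or_lt_of_le hx.2 with rfl | hlt
    · have hsub : Set.Ioc a x ⊆ insert x (Set.Iio x) := by
        intro y hy
        rcases eq_or_lt_of_le hy.2 with rfl | h
        · exact Set.mem_insert _ _
        · exact Set.mem_insert_of_mem _ h
      have hc' : ContinuousWithinAt ψ (Set.Ioc a x) x :=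
        (continuousWithinAt_insert_self.mpr hc).mono hsub
      exact ((cont.continuousAt.comp_continuousWithinAt hc').mul
        ((Real.continuous_exp.comp (by continuity)).continuousWithinAt))
    · exact ((hg x ⟨hx.1, hlt⟩).differentiableAt.continuousAt).continuousWithinAt
  have hanti : AntitoneOn g (Set.Ioc a b) := by
    apply antitoneOn_of_deriv_nonpos (convex_Ioc a b) hcont
    · rw [interior_Ioc]
      exact fun x hx => (hg x hx).differentiableAt.differentiableWithinAt
    · rw [interior_Ioc]
      intro x hx
      rw [(hg x hx).deriv]
      have h1 := hquad (ψ x)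
      have h2 := (Real.exp_pos (α * (x - a))).le
      apply mul_nonpos_of_nonpos_of_nonneg _ h2
      linarith
  intro s hs
  have hIoo : Set.Ioo a s ∈ 𝓝[>] a := Ioo_mem_nhdsGT_of_mem ⟨le_refl a, hs.1⟩
  have hlimg : Tendsto g (𝓝[>] a) (𝓝 ((v ⬝ᵥ P.mulVec v) * Real.exp (α * (a - a)))) := by
    apply Tendsto.mul
    · exact (cont.tendsto v).comp hlim
    · exact ((Real.continuous_exp.comp (by continuity)).tendsto a).mono_left nhdsWithin_le_nhds
  have hgs : g s ≤ v ⬝ᵥ P.mulVec v := by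
    have hev : ∀ᶠ x in 𝓝[>] a, g s ≤ g x := by
      filter_upwards [hIoo] with x hx
      exact hanti ⟨hx.1, hx.2.le.trans hs.2⟩ hs hx.2.le
    have := ge_of_tendsto hlimg hev
    simpa [sub_self] using this
  have hE := Real.exp_pos (α * (s - a))
  rw [show -α * (s - a) = -(α * (s - a)) by ring, Real.exp_neg, ← div_eq_mul_inv,
    le_div_iff₀ hE]
  exact hgs

/-- **Theorem 2, part 2: exponential stability without disturbance.** Suppose the
two LMIs `[[-PL - LᵀP + αP, P], [Pᵀ, -ρ² I]] ≺ 0` and `[[-βP, Peᵀ], [Pe, -P⁻¹]] ≺ 0` hold for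
a symmetric positive definite `P`, `α, ρ > 0`, `0 < β < 1`.  Let the reset times
`t 0 < t 1 < ⋯` have average impulsive interval `Tbar` and chatter bound `N₀` (the number `m` of
reset times in `(t 0, s]` satisfies `m ≥ (s - t 0)/Tbar - N₀`), with `α > ln β / Tbar`.  If `ψ`
solves `ψ' = -L ψ` between resets with jumps `ψ(t_m⁺) = Pe ψ(t_m)`, then the Lyapunov function
`V(s) = ψ(s)ᵀ P ψ(s)` satisfies `V(s) ≤ V(t 0⁺) β^{-N₀} e^{-(α - ln β / Tbar)(s - t 0)}` for all
`s > t 0`. -/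
theorem clustered_network_exponential_stability (N : ℕ) (L Pe P : Matrix (Fin N) (Fin N) ℝ)
    (hPsymm : P.IsSymm)
    (hPpd : ∀ x : Fin N → ℝ, x ≠ 0 → 0 < x ⬝ᵥ P.mulVec x)
    (α ρ β : ℝ) (hα : 0 < α) (hρ : 0 < ρ) (hβ0 : 0 < β) (hβ1 : β < 1)
    (hLMI1 : ∀ x : Fin N ⊕ Fin N → ℝ, x ≠ 0 →
      x ⬝ᵥ (Matrix.fromBlocks (-(P * L) - Lᵀ * P + α • P) P Pᵀ
        (-(ρ ^ 2) • (1 : Matrix (Fin N) (Fin N) ℝ))).mulVec x < 0)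
    (hLMI2 : ∀ x : Fin N ⊕ Fin N → ℝ, x ≠ 0 →
      x ⬝ᵥ (Matrix.fromBlocks (-β • P) Peᵀ Pe (-P⁻¹)).mulVec x < 0)
    (t : ℕ → ℝ) (hmono : StrictMono t) (hunb : Tendsto t atTop atTop)
    (Tbar : ℝ) (hTbar : 0 < Tbar) (N₀ : ℕ)
    (hcount : ∀ m : ℕ, ∀ s ∈ Set.Ioc (t m) (t (m + 1)),
      (s - t 0) / Tbar - (N₀ : ℝ) ≤ (m : ℝ))
    (hrate : Real.log β / Tbar < α)
    (ψ : ℝ → Fin N → ℝ) (ψp : ℕ → Fin N → ℝ)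
    (hψp : ∀ m : ℕ, Tendsto ψ (𝓝[>] (t m)) (𝓝 (ψp m)))
    (hderiv : ∀ m : ℕ, ∀ s ∈ Set.Ioo (t m) (t (m + 1)),
      HasDerivAt ψ (-(L.mulVec (ψ s))) s)
    (hleft : ∀ m : ℕ, ContinuousWithinAt ψ (Set.Iio (t (m + 1))) (t (m + 1)))
    (hjump : ∀ m : ℕ, 1 ≤ m → ψp m = Pe.mulVec (ψ (t m))) :
    ∀ s : ℝ, t 0 < s →
      ψ s ⬝ᵥ P.mulVec (ψ s) ≤
        (ψp 0 ⬝ᵥ P.mulVec (ψp 0)) * (β ^ N₀)⁻¹ *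
          Real.exp (-(α - Real.log β / Tbar) * (s - t 0)) := by
  classical
  have hVnn : ∀ y : Fin N → ℝ, 0 ≤ y ⬝ᵥ P.mulVec y := by
    intro y
    by_cases hy : y = 0
    · simp [hy]
    · exact (hPpd y hy).le
  have hPdef : P.PosDef := by
    apply Matrix.PosDef.of_dotProduct_mulVec_pos
    · show Pᴴ = P
      have h : Pᴴ = Pᵀ := by
        ext i j; simp [Matrix.conjTranspose_apply, Matrix.transpose_apply]
      rw [h]; exact hPsymm
    · intro x hx
      simpa using hPpd x hx
  have hdet : IsUnit P.det := hPdef.det_pos.ne'.isUnit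
  have hPinv : P⁻¹ * P = 1 := Matrix.nonsing_inv_mul P hdet
  have hquad : ∀ y : Fin N → ℝ, (-(L.mulVec y)) ⬝ᵥ P.mulVec y + y ⬝ᵥ P.mulVec (-(L.mulVec y))
      ≤ -α * (y ⬝ᵥ P.mulVec y) := by
    intro y
    by_cases hy : y = 0
    · simp [hy]
    · have hx : Sum.elim y (0 : Fin N → ℝ) ≠ 0 := by
        intro h
        exact hy (funext fun i => congrFun h (Sum.inl i))
      have h1 := hLMI1 (Sum.elim y 0) hx
      rw [Matrix.fromBlocks_mulVec] at h1
      simp only [Sum.elim_comp_inl, Sum.elim_comp_inr, Matrix.mulVec_zero, add_zero] at h1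
      rw [sumElim_dotProduct_sumElim] at h1
      simp only [zero_dotProduct, add_zero, Matrix.sub_mulVec, Matrix.add_mulVec,
        Matrix.neg_mulVec, Matrix.smul_mulVec, dotProduct_add,
        dotProduct_sub, dotProduct_neg, dotProduct_smul,
        smul_eq_mul] at h1
      have e1 : (L.mulVec y) ⬝ᵥ P.mulVec y = y ⬝ᵥ (Lᵀ * P).mulVec y := by
        rw [← Matrix.mulVec_mulVec, Matrix.dotProduct_mulVec y Lᵀ (P.mulVec y),
          Matrix.vecMul_transpose]
      have e2 : y ⬝ᵥ P.mulVec (L.mulVec y) = y ⬝ᵥ (P * L).mulVec y := by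
        rw [Matrix.mulVec_mulVec]
      simp only [Matrix.mulVec_neg, neg_dotProduct, dotProduct_neg]
      rw [e1, e2]
      linarith
  have hβjump : ∀ y : Fin N → ℝ,
      (Pe.mulVec y) ⬝ᵥ P.mulVec (Pe.mulVec y) ≤ β * (y ⬝ᵥ P.mulVec y) := by
    intro y
    by_cases hy : y = 0
    · simp [hy]
    · set w : Fin N → ℝ := Pe.mulVec y with hw
      set z : Fin N → ℝ := P.mulVec w with hzdef
      have hx : Sum.elim y z ≠ 0 := by
        intro h
        exact hy (funext fun i => congrFun h (Sum.inl i))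
      have h2 := hLMI2 (Sum.elim y z) hx
      rw [Matrix.fromBlocks_mulVec] at h2
      simp only [Sum.elim_comp_inl, Sum.elim_comp_inr] at h2
      rw [sumElim_dotProduct_sumElim] at h2
      have hz : P⁻¹.mulVec z = w := by
        rw [hzdef, Matrix.mulVec_mulVec, hPinv, Matrix.one_mulVec]
      have e2 : y ⬝ᵥ Peᵀ.mulVec z = w ⬝ᵥ z := by
        rw [Matrix.dotProduct_mulVec, Matrix.vecMul_transpose, hw]
      have e3 : z ⬝ᵥ w = w ⬝ᵥ z := dotProduct_comm _ _
      simp only [dotProduct_add, Matrix.neg_mulVec, dotProduct_neg,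
        neg_smul, Matrix.smul_mulVec, dotProduct_smul, smul_eq_mul] at h2
      rw [hz, e2] at h2
      have e4 : z ⬝ᵥ Pe.mulVec y = w ⬝ᵥ z := by rw [← hw, e3]
      rw [e4] at h2
      show w ⬝ᵥ P.mulVec w ≤ β * (y ⬝ᵥ P.mulVec y)
      rw [← hzdef]
      linarith
  have key : ∀ m : ℕ, ∀ s ∈ Set.Ioc (t m) (t (m + 1)),
      ψ s ⬝ᵥ P.mulVec (ψ s) ≤
        (ψp 0 ⬝ᵥ P.mulVec (ψp 0)) * β ^ m * Real.exp (-α * (s - t 0)) := by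
    intro m
    induction m with
    | zero =>
      intro s hs
      have h := gron' hquad (hmono (Nat.lt_succ_self 0)) (hψp 0) (hderiv 0) (hleft 0) s hs
      simpa using h
    | succ m ih =>
      intro s hs
      have hb := gron' hquad (hmono (Nat.lt_succ_self (m + 1))) (hψp (m + 1)) (hderiv (m + 1))
        (hleft (m + 1)) s hs
      have hV1 := ih (t (m + 1)) ⟨hmono (Nat.lt_succ_self m), le_refl _⟩
      have hjm : ψp (m + 1) ⬝ᵥ P.mulVec (ψp (m + 1))
          ≤ β * (ψ (t (m + 1)) ⬝ᵥ P.mulVec (ψ (t (m + 1)))) := by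
        rw [hjump (m + 1) (by omega)]
        exact hβjump _
      have hE2 := Real.exp_pos (-α * (s - t (m + 1)))
      have step1 : ψp (m + 1) ⬝ᵥ P.mulVec (ψp (m + 1))
          ≤ β * ((ψp 0 ⬝ᵥ P.mulVec (ψp 0)) * β ^ m * Real.exp (-α * (t (m + 1) - t 0))) :=
        hjm.trans (mul_le_mul_of_nonneg_left hV1 hβ0.le)
      have step2 : ψ s ⬝ᵥ P.mulVec (ψ s)
          ≤ β * ((ψp 0 ⬝ᵥ P.mulVec (ψp 0)) * β ^ m * Real.exp (-α * (t (m + 1) - t 0)))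
            * Real.exp (-α * (s - t (m + 1))) :=
        hb.trans (mul_le_mul_of_nonneg_right step1 hE2.le)
      have eE : Real.exp (-α * (t (m + 1) - t 0)) * Real.exp (-α * (s - t (m + 1)))
          = Real.exp (-α * (s - t 0)) := by
        rw [← Real.exp_add]; ring_nf
      calc ψ s ⬝ᵥ P.mulVec (ψ s)
          ≤ β * ((ψp 0 ⬝ᵥ P.mulVec (ψp 0)) * β ^ m * Real.exp (-α * (t (m + 1) - t 0)))
            * Real.exp (-α * (s - t (m + 1))) := step2
        _ = (ψp 0 ⬝ᵥ P.mulVec (ψp 0)) * β ^ (m + 1)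
            * (Real.exp (-α * (t (m + 1) - t 0)) * Real.exp (-α * (s - t (m + 1)))) := by
            rw [pow_succ]; ring
        _ = (ψp 0 ⬝ᵥ P.mulVec (ψp 0)) * β ^ (m + 1) * Real.exp (-α * (s - t 0)) := by
            rw [eE]
  intro s hs
  have hex : ∃ M : ℕ, s ≤ t M := by
    obtain ⟨M, hM⟩ := (hunb.eventually (eventually_ge_atTop s)).exists
    exact ⟨M, hM⟩
  have hM := Nat.find_spec hex
  have hM0 : Nat.find hex ≠ 0 := by
    intro h
    rw [h] at hM
    exact absurd hM (not_le.mpr hs)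
  obtain ⟨m, hmeq⟩ := Nat.exists_eq_succ_of_ne_zero hM0
  have hlt : t m < s := by
    have h := Nat.find_min hex (m := m) (by omega)
    exact lt_of_not_ge h
  have hmem : s ∈ Set.Ioc (t m) (t (m + 1)) := ⟨hlt, by rw [hmeq] at hM; exact hM⟩
  have h1 := key m s hmem
  have h2 := hcount m s hmem
  refine h1.trans ?_
  have hlogβ : Real.log β < 0 := Real.log_neg hβ0 hβ1
  have hsuff : β ^ m * Real.exp (-α * (s - t 0))
      ≤ (β ^ N₀)⁻¹ * Real.exp (-(α - Real.log β / Tbar) * (s - t 0)) := by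
    have hβm : (β : ℝ) ^ m = Real.exp ((m : ℝ) * Real.log β) := by
      rw [Real.exp_nat_mul, Real.exp_log hβ0]
    have hβN : ((β : ℝ) ^ N₀)⁻¹ = Real.exp (-((N₀ : ℝ) * Real.log β)) := by
      rw [Real.exp_neg, Real.exp_nat_mul, Real.exp_log hβ0]
    rw [hβm, hβN, ← Real.exp_add, ← Real.exp_add, Real.exp_le_exp]
    have h3 : (m : ℝ) * Real.log β ≤ ((s - t 0) / Tbar - (N₀ : ℝ)) * Real.log β :=
      mul_le_mul_of_nonpos_right h2 hlogβ.le
    have h4 : ((s - t 0) / Tbar - (N₀ : ℝ)) * Real.log β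
        = Real.log β / Tbar * (s - t 0) - (N₀ : ℝ) * Real.log β := by ring
    have h5 : -(α - Real.log β / Tbar) * (s - t 0)
        = -α * (s - t 0) + Real.log β / Tbar * (s - t 0) := by ring
    linarith
  have hVp0 := hVnn (ψp 0)
  calc (ψp 0 ⬝ᵥ P.mulVec (ψp 0)) * β ^ m * Real.exp (-α * (s - t 0))
      = (ψp 0 ⬝ᵥ P.mulVec (ψp 0)) * (β ^ m * Real.exp (-α * (s - t 0))) := by ring
    _ ≤ (ψp 0 ⬝ᵥ P.mulVec (ψp 0))
        * ((β ^ N₀)⁻¹ * Real.exp (-(α - Real.log β / Tbar) * (s - t 0))) :=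
        mul_le_mul_of_nonneg_left hsuff hVp0
    _ = (ψp 0 ⬝ᵥ P.mulVec (ψp 0)) * (β ^ N₀)⁻¹
        * Real.exp (-(α - Real.log β / Tbar) * (s - t 0)) := by ring
end

section
/- Let L be an N×N Laplacian matrix whose associated directed graph contains a directed spanning tree. Then 0 is an algebraically simple eigenvalue of L (i.e., 0 is a root of multiplicity exactly 1 of the characteristic polynomial of L), the all-ones vector 1_N is an eigenvector of L for the eigenvalue 0, and every other complex eigenvalue μ of L satisfies Re(μ) > 0 (equivalently, every nonzero eigenvalue of -L has negative real part). -/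
open Matrix Polynomial Finset

namespace LaplacianAux

variable {N : ℕ}

/-- Rewriting a Laplacian row action as a sum over off-diagonal entries. -/
lemma mulVec_eq_offdiag_sum (L : Matrix (Fin N) (Fin N) ℝ)
    (hrow : ∀ i : Fin N, ∑ j, L i j = 0) (v : Fin N → ℝ) (i : Fin N) :
    L.mulVec v i = ∑ j ∈ Finset.univ.erase i, L i j * (v j - v i) := by
  have h0 : ∑ j, L i j * (v j - v i) = L.mulVec v i := by
    simp only [mul_sub, Finset.sum_sub_distrib, ← Finset.sum_mul, hrow i, zero_mul, sub_zero]
    rfl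
  rw [Finset.sum_erase_eq_sub (Finset.mem_univ i), h0]
  simp

/-- At an argmax of `v`, the value of `L.mulVec v` is nonnegative. -/
lemma mulVec_nonneg_at_argmax (L : Matrix (Fin N) (Fin N) ℝ)
    (hoff : ∀ i j : Fin N, i ≠ j → L i j ≤ 0)
    (hrow : ∀ i : Fin N, ∑ j, L i j = 0) (v : Fin N → ℝ) (i : Fin N)
    (hmax : ∀ j, v j ≤ v i) : 0 ≤ L.mulVec v i := by
  rw [mulVec_eq_offdiag_sum L hrow v i]
  refine Finset.sum_nonneg fun j hj => ?_
  have hji : j ≠ i := Finset.ne_of_mem_erase hj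
  nlinarith [hoff i j hji.symm, hmax j]

/-- The image of `L` contains no nonzero constant vector. -/
lemma const_in_range_zero (L : Matrix (Fin N) (Fin N) ℝ)
    (hoff : ∀ i j : Fin N, i ≠ j → L i j ≤ 0)
    (hrow : ∀ i : Fin N, ∑ j, L i j = 0) (hN : 0 < N) (w : Fin N → ℝ) (c : ℝ)
    (hw : L.mulVec w = fun _ => c) : c = 0 := by
  have hne : (Finset.univ : Finset (Fin N)).Nonempty := ⟨⟨0, hN⟩, Finset.mem_univ _⟩
  obtain ⟨i, -, hi⟩ := Finset.exists_mem_eq_sup' hne w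
  obtain ⟨i', -, hi'⟩ := Finset.exists_mem_eq_inf' hne w
  have hmax : ∀ j, w j ≤ w i := fun j => hi ▸ Finset.le_sup' w (Finset.mem_univ j)
  have hmin : ∀ j, w i' ≤ w j := fun j => hi' ▸ Finset.inf'_le w (Finset.mem_univ j)
  have h1 : 0 ≤ L.mulVec w i := mulVec_nonneg_at_argmax L hoff hrow w i hmax
  have h2 : 0 ≤ L.mulVec (-w) i' :=
    mulVec_nonneg_at_argmax L hoff hrow (-w) i' (fun j => by simpa using hmin j)
  rw [hw] at h1
  rw [Matrix.mulVec_neg, hw] at h2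
  simp only [Pi.neg_apply] at h2
  linarith

/-- Kernel vectors are bounded above by their value at the root. -/
lemma ker_le_root (L : Matrix (Fin N) (Fin N) ℝ)
    (hoff : ∀ i j : Fin N, i ≠ j → L i j ≤ 0)
    (hrow : ∀ i : Fin N, ∑ j, L i j = 0) (r : Fin N)
    (htree : ∀ i : Fin N,
      Relation.ReflTransGen (fun j i : Fin N => i ≠ j ∧ L i j < 0) r i)
    (v : Fin N → ℝ) (hv : L.mulVec v = 0) (i : Fin N) : v i ≤ v r := by
  have hne : (Finset.univ : Finset (Fin N)).Nonempty := ⟨r, Finset.mem_univ _⟩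
  set m := Finset.univ.sup' hne v with hm
  have hmax : ∀ j, v j ≤ m := fun j => Finset.le_sup' v (Finset.mem_univ j)
  -- backward propagation of the maximum along edges
  have hback : ∀ a b : Fin N, v b = m → b ≠ a → L b a < 0 → v a = m := by
    intro a b hb hba hL
    have h0 : L.mulVec v b = 0 := by rw [hv]; rfl
    rw [mulVec_eq_offdiag_sum L hrow v b] at h0
    have hterm : ∀ j ∈ Finset.univ.erase b, 0 ≤ L b j * (v j - v b) := by
      intro j hj
      have hjb : j ≠ b := Finset.ne_of_mem_erase hj
      nlinarith [hoff b j hjb.symm, hmax j, hb.ge]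
    have hall := (Finset.sum_eq_zero_iff_of_nonneg hterm).mp h0
    have ha : L b a * (v a - v b) = 0 := hall a (Finset.mem_erase.mpr ⟨hba.symm, Finset.mem_univ a⟩)
    have : v a - v b = 0 := by
      rcases mul_eq_zero.mp ha with h | h
      · exact absurd h (ne_of_lt hL)
      · exact h
    rw [hb] at this; linarith
  -- propagate back to the root along any path
  have hroot : ∀ i : Fin N, Relation.ReflTransGen
      (fun j i : Fin N => i ≠ j ∧ L i j < 0) r i → v i = m → v r = m := by
    intro i hpath
    induction hpath with
    | refl => exact id
    | tail _ hstep ih => exact fun hc => ih (hback _ _ hc hstep.1 hstep.2)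
  obtain ⟨i0, -, hi0⟩ := Finset.exists_mem_eq_sup' hne v
  have hvr : v r = m := hroot i0 (htree i0) hi0.symm
  rw [hvr]; exact hmax i

/-- Real kernel vectors are constant. -/
lemma ker_const (L : Matrix (Fin N) (Fin N) ℝ)
    (hoff : ∀ i j : Fin N, i ≠ j → L i j ≤ 0)
    (hrow : ∀ i : Fin N, ∑ j, L i j = 0) (r : Fin N)
    (htree : ∀ i : Fin N,
      Relation.ReflTransGen (fun j i : Fin N => i ≠ j ∧ L i j < 0) r i)
    (v : Fin N → ℝ) (hv : L.mulVec v = 0) (i : Fin N) : v i = v r := by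
  have h1 := ker_le_root L hoff hrow r htree v hv i
  have h2 := ker_le_root L hoff hrow r htree (-v) (by rw [Matrix.mulVec_neg, hv, neg_zero]) i
  simp only [Pi.neg_apply] at h2
  linarith

variable (L : Matrix (Fin N) (Fin N) ℝ)

/-- Real part of complex mulVec. -/
lemma re_mulVec (u : Fin N → ℂ) (i : Fin N) :
    L.mulVec (fun j => (u j).re) i = ((L.map (algebraMap ℝ ℂ)).mulVec u i).re := by
  simp [Matrix.mulVec, dotProduct, Complex.re_sum, Complex.mul_re]

lemma im_mulVec (u : Fin N → ℂ) (i : Fin N) :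
    L.mulVec (fun j => (u j).im) i = ((L.map (algebraMap ℝ ℂ)).mulVec u i).im := by
  simp [Matrix.mulVec, dotProduct, Complex.im_sum, Complex.mul_im]

/-- Complex kernel vectors are constant. -/
lemma ker_const_complex
    (hoff : ∀ i j : Fin N, i ≠ j → L i j ≤ 0)
    (hrow : ∀ i : Fin N, ∑ j, L i j = 0) (r : Fin N)
    (htree : ∀ i : Fin N,
      Relation.ReflTransGen (fun j i : Fin N => i ≠ j ∧ L i j < 0) r i)
    (u : Fin N → ℂ) (hu : (L.map (algebraMap ℝ ℂ)).mulVec u = 0) (i : Fin N) : u i = u r := by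
  have hre : L.mulVec (fun j => (u j).re) = 0 := by
    funext i; rw [re_mulVec, hu]; rfl
  have him : L.mulVec (fun j => (u j).im) = 0 := by
    funext i; rw [im_mulVec, hu]; rfl
  have h1 := ker_const L hoff hrow r htree _ hre i
  have h2 := ker_const L hoff hrow r htree _ him i
  exact Complex.ext h1 h2

/-- No complex Jordan block at 0: `L² x = 0 → L x = 0`. -/
lemma ker_sq (hoff : ∀ i j : Fin N, i ≠ j → L i j ≤ 0)
    (hrow : ∀ i : Fin N, ∑ j, L i j = 0) (r : Fin N)
    (htree : ∀ i : Fin N,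
      Relation.ReflTransGen (fun j i : Fin N => i ≠ j ∧ L i j < 0) r i)
    (x : Fin N → ℂ)
    (hx : (L.map (algebraMap ℝ ℂ)).mulVec ((L.map (algebraMap ℝ ℂ)).mulVec x) = 0) :
    (L.map (algebraMap ℝ ℂ)).mulVec x = 0 := by
  set u := (L.map (algebraMap ℝ ℂ)).mulVec x with hu
  have hconst : ∀ i, u i = u r := ker_const_complex L hoff hrow r htree u hx
  have hreal : (u r).re = 0 := by
    apply const_in_range_zero L hoff hrow r.pos (fun j => (x j).re)
    funext i
    rw [re_mulVec, ← hu, hconst i]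
  have himag : (u r).im = 0 := by
    apply const_in_range_zero L hoff hrow r.pos (fun j => (x j).im)
    funext i
    rw [im_mulVec, ← hu, hconst i]
  have hur : u r = 0 := Complex.ext (by simpa using hreal) (by simpa using himag)
  funext i
  have hui : u i = 0 := by rw [hconst i, hur]
  simpa using hui

end LaplacianAux

/-- If `L` is an `N × N` Laplacian matrix whose associated directed graph
(an edge from `j` to `i` whenever `i ≠ j` and `L i j < 0`) contains a directed spanning tree,
then `0` is an algebraically simple eigenvalue of `L` (a root of multiplicity exactly `1` of
its characteristic polynomial), the all-ones vector is an eigenvector of `L` for the eigenvalue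
`0`, and every other complex eigenvalue `μ` of `L` satisfies `Re μ > 0`. -/
theorem laplacian_spanningTree_zero_simple_eigenvalue (N : ℕ)
    (L : Matrix (Fin N) (Fin N) ℝ)
    (hoff : ∀ i j : Fin N, i ≠ j → L i j ≤ 0)
    (hrow : ∀ i : Fin N, ∑ j, L i j = 0)
    (htree : ∃ r : Fin N, ∀ i : Fin N,
      Relation.ReflTransGen (fun j i : Fin N => i ≠ j ∧ L i j < 0) r i) :
    ((L.map (algebraMap ℝ ℂ)).charpoly.rootMultiplicity 0 = 1) ∧
    (L.mulVec (fun _ => (1 : ℝ)) = 0) ∧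
    (∀ μ : ℂ, (L.map (algebraMap ℝ ℂ)).charpoly.IsRoot μ → μ ≠ 0 → 0 < μ.re) := by
  obtain ⟨r, htree⟩ := htree
  have hN : 0 < N := r.pos
  set M := L.map (algebraMap ℝ ℂ) with hM
  have hMrow : ∀ i : Fin N, ∑ j, M i j = 0 := by
    intro i
    simp only [hM, Matrix.map_apply]
    rw [← map_sum, hrow i, map_zero]
  -- part 2
  have hones : L.mulVec (fun _ => (1 : ℝ)) = 0 := by
    funext i
    simp [Matrix.mulVec, dotProduct, hrow i]
  have honesC : M.mulVec (fun _ => (1 : ℂ)) = 0 := by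
    funext i
    simpa [Matrix.mulVec, dotProduct] using hMrow i
  refine ⟨?_, hones, ?_⟩
  · -- root multiplicity 1
    set b := Pi.basisFun ℂ (Fin N)
    set φ := Matrix.toLin b b M with hφ
    have hφapp : ∀ x, φ x = M.mulVec x := by
      intro x
      rw [hφ, Matrix.toLin_eq_toLin']
      exact Matrix.toLin'_apply M x
    have hcp : M.charpoly = φ.charpoly := by
      rw [hφ, ← LinearMap.charpoly_toMatrix (Matrix.toLin b b M) b, LinearMap.toMatrix_toLin]
    have hker : ∀ n (x : Fin N → ℂ), (φ ^ n) x = 0 → φ x = 0 := by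
      intro n
      induction n with
      | zero => intro x hx; simp only [pow_zero, Module.End.one_apply] at hx; rw [hx, map_zero]
      | succ n ih =>
        intro x hx
        rw [pow_succ, Module.End.mul_apply] at hx
        have h2 := ih (φ x) hx
        rw [hφapp, hφapp] at h2
        rw [hφapp]
        exact LaplacianAux.ker_sq L hoff hrow r htree x h2
    have hspan : Module.End.maxGenEigenspace φ 0 = Submodule.span ℂ {(fun _ => (1 : ℂ) : Fin N → ℂ)} := by
      apply le_antisymm
      · intro x hx
        rw [Module.End.mem_maxGenEigenspace] at hx
        simp only [zero_smul, sub_zero] at hx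
        obtain ⟨n, hn⟩ := hx
        have h0 : M.mulVec x = 0 := by rw [← hφapp]; exact hker n x hn
        have hc := LaplacianAux.ker_const_complex L hoff hrow r htree x h0
        rw [Submodule.mem_span_singleton]
        exact ⟨x r, by funext i; simp [hc i]⟩
      · rw [Submodule.span_le, Set.singleton_subset_iff]
        rw [SetLike.mem_coe, Module.End.mem_maxGenEigenspace]
        refine ⟨1, ?_⟩
        simp only [zero_smul, sub_zero, pow_one]
        rw [hφapp]
        exact honesC
    have hones_ne : (fun _ => (1 : ℂ) : Fin N → ℂ) ≠ 0 := by
      intro h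
      have := congrFun h ⟨0, hN⟩
      simp at this
    have hfr : Module.finrank ℂ (Module.End.maxGenEigenspace φ 0) = 1 := by
      rw [hspan]
      exact finrank_span_singleton hones_ne
    rw [Polynomial.rootMultiplicity_eq_natTrailingDegree', hcp,
      ← LinearMap.finrank_maxGenEigenspace_zero_eq, hfr]
  · -- eigenvalues
    intro μ hroot hμ
    have hdet : (Matrix.scalar (Fin N) μ - M).det = 0 := by
      have h := hroot
      rw [Polynomial.IsRoot, Matrix.charpoly, eval_det, Matrix.matPolyEquiv_charmatrix,
        Polynomial.eval_sub, Polynomial.eval_X, Polynomial.eval_C] at h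
      exact h
    obtain ⟨v, hv0, hv⟩ := (Matrix.exists_mulVec_eq_zero_iff.mpr hdet)
    have heig : ∀ i, μ * v i = ∑ j, M i j * v j := by
      intro i
      have := congrFun hv i
      rw [Matrix.sub_mulVec] at this
      have hscal : (Matrix.scalar (Fin N) μ).mulVec v i = μ * v i := by
        simp [Matrix.mulVec, dotProduct, Matrix.scalar_apply, Matrix.diagonal_apply]
      simp only [Pi.sub_apply, hscal] at this
      have : μ * v i - M.mulVec v i = 0 := this
      rw [sub_eq_zero] at this
      exact this
    -- pick argmax of |v|
    have hne : (Finset.univ : Finset (Fin N)).Nonempty := ⟨r, Finset.mem_univ _⟩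
    obtain ⟨i, -, hi⟩ := Finset.exists_mem_eq_sup' hne (fun j => ‖v j‖)
    have hmax : ∀ j, ‖v j‖ ≤ ‖v i‖ := fun j =>
      hi ▸ Finset.le_sup' (fun j => ‖v j‖) (Finset.mem_univ j)
    have hvi : v i ≠ 0 := by
      intro h
      apply hv0
      funext j
      have := hmax j
      rw [h, norm_zero] at this
      exact norm_eq_zero.mp (le_antisymm this (norm_nonneg _))
    have habs : ‖μ - (L i i : ℂ)‖ * ‖v i‖ ≤ L i i * ‖v i‖ := by
      have hrow' : ∑ j ∈ Finset.univ.erase i, L i j = - L i i := by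
        have := hrow i
        rw [Finset.sum_erase_eq_sub (Finset.mem_univ i), this]
        ring
      have hkey : (μ - (L i i : ℂ)) * v i = ∑ j ∈ Finset.univ.erase i, (L i j : ℂ) * v j := by
        rw [Finset.sum_erase_eq_sub (Finset.mem_univ i)]
        have h := heig i
        simp only [hM, Matrix.map_apply, Complex.coe_algebraMap] at h ⊢
        rw [← h]
        ring
      have hstep : ∀ j ∈ Finset.univ.erase i,
          ‖(L i j : ℂ) * v j‖ ≤ (- L i j) * ‖v i‖ := by
        intro j hj
        have hji : j ≠ i := Finset.ne_of_mem_erase hj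
        have hLij : L i j ≤ 0 := hoff i j hji.symm
        rw [norm_mul, Complex.norm_real, Real.norm_eq_abs, abs_of_nonpos hLij]
        exact mul_le_mul_of_nonneg_left (hmax j) (by linarith)
      calc ‖μ - (L i i : ℂ)‖ * ‖v i‖
          = ‖(μ - (L i i : ℂ)) * v i‖ := (norm_mul _ _).symm
        _ = ‖∑ j ∈ Finset.univ.erase i, (L i j : ℂ) * v j‖ := by rw [hkey]
        _ ≤ ∑ j ∈ Finset.univ.erase i, ‖(L i j : ℂ) * v j‖ :=
            norm_sum_le _ _
        _ ≤ ∑ j ∈ Finset.univ.erase i, (- L i j) * ‖v i‖ :=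
            Finset.sum_le_sum hstep
        _ = L i i * ‖v i‖ := by
            rw [← Finset.sum_mul, Finset.sum_neg_distrib, hrow']
            ring
    have hvipos : 0 < ‖v i‖ := norm_pos_iff.mpr hvi
    have h1 : ‖μ - (L i i : ℂ)‖ ≤ L i i :=
      le_of_mul_le_mul_right habs hvipos
    have hd : 0 ≤ L i i := le_trans (norm_nonneg _) h1
    have h2 : (μ.re - L i i) * (μ.re - L i i) + μ.im * μ.im ≤ L i i * L i i := by
      have h := mul_self_le_mul_self (norm_nonneg _) h1
      rwa [← sq, Complex.sq_norm, Complex.normSq_apply, Complex.sub_re, Complex.sub_im,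
        Complex.ofReal_re, Complex.ofReal_im, sub_zero] at h
    have h3 : 0 < μ.re * μ.re + μ.im * μ.im := by
      have h := Complex.normSq_pos.mpr hμ
      rwa [Complex.normSq_apply] at h
    by_contra hna
    push_neg at hna
    nlinarith [mul_nonneg hd (neg_nonneg.mpr hna)]
end
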